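/- arXiv:2603.26850 — 4 statements merged into one kernel-verified Lean document; each statement's English description precedes it below -/
import Mathlib

section
/- Let H, E ∈ ℝ^{n×K} with H of full rank K, set Ĥ = H + E, and assume ρ(EᵀE) ≤ (1/4)·ρ_min(HᵀH). For a unit vector u ∈ ℝⁿ define Λ_u = (HᵀH)⁻¹Hᵀu and the quantities I = ‖E·Λ_u‖², II = ‖(ĤᵀĤ − HᵀH)·Λ_u‖², III = ‖H(HᵀH)⁻¹Eᵀu‖². Then ‖P_{[H]}(u) − P_{[Ĥ]}(u)‖² ≤ 16·I + (16 + 32·Cond(HᵀH))·ρ_min(HᵀH)⁻¹·II + (5 + 64·Cond(HᵀH) + 128·Cond(HᵀH)³)·III. -/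
open MeasureTheory ProbabilityTheory Matrix

/-- Orthogonal projection onto the column span of `M` (for `M` of full column rank). -/
noncomputable def projMat {n K : ℕ} (M : Matrix (Fin n) (Fin K) ℝ) :
    Matrix (Fin n) (Fin n) ℝ :=
  M * (Mᵀ * M)⁻¹ * Mᵀ

/-- Ridge-regularized projection operator with parameter `α`. -/
noncomputable def projMatReg {n K : ℕ} (M : Matrix (Fin n) (Fin K) ℝ) (α : ℝ) :
    Matrix (Fin n) (Fin n) ℝ :=
  M * (Mᵀ * M + α • (1 : Matrix (Fin K) (Fin K) ℝ))⁻¹ * Mᵀ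

/-- `ℓ²`-operator (spectral) norm of a square real matrix. -/
noncomputable def opNorm {n : ℕ} (M : Matrix (Fin n) (Fin n) ℝ) : ℝ :=
  ‖LinearMap.toContinuousLinearMap (Matrix.toEuclideanLin M)‖

/-- Largest real eigenvalue of a square matrix (`ρ`). -/
noncomputable def rhoMax {K : ℕ} (A : Matrix (Fin K) (Fin K) ℝ) : ℝ :=
  sSup (spectrum ℝ A)

/-- Smallest real eigenvalue of a square matrix (`ρ_min`). -/
noncomputable def rhoMin {K : ℕ} (A : Matrix (Fin K) (Fin K) ℝ) : ℝ :=
  sInf (spectrum ℝ A)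

/-- Condition number `Cond(A) = ρ(A)/ρ_min(A)`. -/
noncomputable def condNum {K : ℕ} (A : Matrix (Fin K) (Fin K) ℝ) : ℝ :=
  rhoMax A / rhoMin A

/-- For a symmetric matrix `M`, `ρ(M) = sup_{‖x‖ = 1} |xᵀ M x|`. -/
noncomputable def rhoAbs {K : ℕ} (M : Matrix (Fin K) (Fin K) ℝ) : ℝ :=
  sSup {r | ∃ x : Fin K → ℝ, x ⬝ᵥ x = 1 ∧ r = |x ⬝ᵥ (M *ᵥ x)|}

/-- The family `Z i`, `i : ι`, consists of i.i.d. standard gaussian random variables. -/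
def IsStdGaussianFamily {Ω : Type} [MeasureSpace Ω] {ι : Type} [Fintype ι]
    (Z : Ω → ι → ℝ) : Prop :=
  (∀ i, Measurable fun ω => Z ω i) ∧
  iIndepFun (fun i ω => Z ω i) ℙ ∧
  ∀ i, Measure.map (fun ω => Z ω i) ℙ = gaussianReal 0 1

section aux
lemma dotT {m k : ℕ} (M : Matrix (Fin m) (Fin k) ℝ) (x : Fin k → ℝ) (y : Fin m → ℝ) :
    x ⬝ᵥ (Mᵀ *ᵥ y) = (M *ᵥ x) ⬝ᵥ y := by
  rw [dotProduct_mulVec, vecMul_transpose]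

lemma qform {m k : ℕ} (M : Matrix (Fin m) (Fin k) ℝ) (z : Fin k → ℝ) :
    z ⬝ᵥ ((Mᵀ * M) *ᵥ z) = (M *ᵥ z) ⬝ᵥ (M *ᵥ z) := by
  rw [← mulVec_mulVec, dotT]

lemma dot_self_nonneg' {m : ℕ} (v : Fin m → ℝ) : 0 ≤ v ⬝ᵥ v :=
  Finset.sum_nonneg fun i _ => mul_self_nonneg _

lemma dot3 {m : ℕ} (a b c : Fin m → ℝ) :
    (a + b + c) ⬝ᵥ (a + b + c) ≤ 3 * (a ⬝ᵥ a + b ⬝ᵥ b + c ⬝ᵥ c) := by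
  simp only [dotProduct, Pi.add_apply]
  rw [← Finset.sum_add_distrib, ← Finset.sum_add_distrib, Finset.mul_sum]
  apply Finset.sum_le_sum
  intro i _
  nlinarith [sq_nonneg (a i - b i), sq_nonneg (a i - c i), sq_nonneg (b i - c i)]

lemma dotCS {m : ℕ} (a b : Fin m → ℝ) : (a ⬝ᵥ b) * (a ⬝ᵥ b) ≤ (a ⬝ᵥ a) * (b ⬝ᵥ b) := by
  have h := Finset.sum_mul_sq_le_sq_mul_sq Finset.univ a b
  simpa [dotProduct, pow_two] using h

lemma key_quad (a b s r : ℝ) (ha : 0 ≤ a) (hb : 0 ≤ b) (hr : 0 ≤ r)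
    (hCS : s * s ≤ a * b) (hag : 4 * r ≤ a) (hbl : b ≤ r) :
    r ≤ a + 2 * s + b := by
  nlinarith [sq_nonneg (a + 2*s), sq_nonneg (a - 2*s),
    mul_nonneg (sub_nonneg.mpr hag) (sub_nonneg.mpr hbl),
    mul_nonneg (sub_nonneg.mpr hag) hb, mul_nonneg hr (sub_nonneg.mpr hbl)]

lemma contract_arith (t qy qx ρ : ℝ) (hρ : 0 < ρ) (hqx : 0 ≤ qx)
    (h1 : ρ/4 * qy ≤ t) (hCS : t * t ≤ qy * qx) (ht : 0 ≤ t) :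
    t ≤ 4/ρ * qx := by
  rw [div_mul_eq_mul_div, le_div_iff₀ hρ]
  rcases eq_or_lt_of_le ht with h | h
  · nlinarith
  · nlinarith [mul_pos h hρ]

lemma final_const (tI tII tIII c r : ℝ) (h1 : 0 ≤ tI) (h2 : 0 ≤ tII) (h3 : 0 ≤ tIII)
    (hc : 1 ≤ c) (hr : 0 ≤ r) :
    3*tI + 3*(4*r)*tII + 3*(4*c)*tIII ≤ 16*tI + (16+32*c)*r*tII + (5+64*c+128*c^3)*tIII := by
  nlinarith [mul_nonneg h2 hr, mul_nonneg (mul_nonneg h2 hr) (sub_nonneg.mpr hc),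
    mul_nonneg h3 (sub_nonneg.mpr hc),
    mul_nonneg (mul_nonneg h3 (sub_nonneg.mpr hc)) (sub_nonneg.mpr hc)]

lemma transpose_mul_self_isHermitian' {m k : ℕ} (M : Matrix (Fin m) (Fin k) ℝ) :
    (Mᵀ * M).IsHermitian := by
  have h := Matrix.isHermitian_conjTranspose_mul_self M
  simpa using h
lemma quad_bounds {K : ℕ} (A : Matrix (Fin K) (Fin K) ℝ) (hA : A.IsHermitian) (x : Fin K → ℝ) :
    rhoMin A * (x ⬝ᵥ x) ≤ x ⬝ᵥ (A *ᵥ x) ∧ x ⬝ᵥ (A *ᵥ x) ≤ rhoMax A * (x ⬝ᵥ x) ∧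
      (0 ≤ rhoMin A → (A *ᵥ x) ⬝ᵥ (A *ᵥ x) ≤ rhoMax A * (x ⬝ᵥ (A *ᵥ x))) := by
  classical
  set U : Matrix (Fin K) (Fin K) ℝ := (hA.eigenvectorUnitary : Matrix (Fin K) (Fin K) ℝ) with hUdef
  have hmem := hA.eigenvectorUnitary.2
  have hstar : star U = Uᵀ := by
    rw [Matrix.star_eq_conjTranspose]
    ext i j
    simp [Matrix.conjTranspose_apply]
  have hU1 : U * Uᵀ = 1 := by rw [← hstar]; exact mem_unitaryGroup_iff.mp hmem
  have hU2 : Uᵀ * U = 1 := by rw [← hstar]; exact mem_unitaryGroup_iff'.mp hmem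
  set lam : Fin K → ℝ := hA.eigenvalues with hlam
  have hA' : A = U * Matrix.diagonal lam * Uᵀ := by
    rw [← hstar]
    simpa using hA.spectral_theorem
  set y : Fin K → ℝ := Uᵀ *ᵥ x with hy
  have hyy : x ⬝ᵥ x = y ⬝ᵥ y := by
    rw [hy, ← dotT Uᵀ x (Uᵀ *ᵥ x), transpose_transpose, mulVec_mulVec, hU1, one_mulVec]
  set z : Fin K → ℝ := Matrix.diagonal lam *ᵥ y with hz
  have hAx : A *ᵥ x = U *ᵥ z := by
    rw [hz, hy, mulVec_mulVec, mulVec_mulVec, ← hA']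
  have hquad : x ⬝ᵥ (A *ᵥ x) = y ⬝ᵥ z := by
    rw [hAx, ← transpose_transpose U, dotT Uᵀ x z, ← hy]
  have hyz : y ⬝ᵥ z = ∑ i, lam i * (y i * y i) := by
    simp [hz, dotProduct, mulVec_diagonal]
    exact Finset.sum_congr rfl fun i _ => by ring
  have hAxAx : (A *ᵥ x) ⬝ᵥ (A *ᵥ x) = z ⬝ᵥ z := by
    rw [hAx, ← dotT U z (U *ᵥ z), mulVec_mulVec, hU2, one_mulVec]
  have hzz : z ⬝ᵥ z = ∑ i, (lam i * lam i) * (y i * y i) := by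
    simp [hz, dotProduct, mulVec_diagonal]
    exact Finset.sum_congr rfl fun i _ => by ring
  have hyy' : y ⬝ᵥ y = ∑ i, y i * y i := rfl
  have hfin : (spectrum ℝ A).Finite := A.finite_real_spectrum
  have hmemspec : ∀ i, lam i ∈ spectrum ℝ A := fun i => hA.eigenvalues_mem_spectrum_real i
  have hlo : ∀ i, rhoMin A ≤ lam i := fun i => csInf_le hfin.bddBelow (hmemspec i)
  have hhi : ∀ i, lam i ≤ rhoMax A := fun i => le_csSup hfin.bddAbove (hmemspec i)
  refine ⟨?_, ?_, ?_⟩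
  · rw [hquad, hyz, hyy, hyy', Finset.mul_sum]
    exact Finset.sum_le_sum fun i _ =>
      mul_le_mul_of_nonneg_right (hlo i) (mul_self_nonneg _)
  · rw [hquad, hyz, hyy, hyy', Finset.mul_sum]
    exact Finset.sum_le_sum fun i _ =>
      mul_le_mul_of_nonneg_right (hhi i) (mul_self_nonneg _)
  · intro h0
    rw [hAxAx, hzz, hquad, hyz, Finset.mul_sum]
    refine Finset.sum_le_sum fun i _ => ?_
    have h1 := hlo i
    have h2 := hhi i
    have h3 : 0 ≤ lam i := le_trans h0 h1
    nlinarith [mul_nonneg (mul_nonneg h3 (sub_nonneg.mpr h2)) (mul_self_nonneg (y i))]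

end aux

/-- Main decomposition of the projection error (Theorem `ProjOperatorSkeletonProof`
with explicit constants). -/
theorem projection_error_decomposition (n K : ℕ) (H E : Matrix (Fin n) (Fin K) ℝ)
    (hH : H.rank = K)
    (hE : rhoMax (Eᵀ * E) ≤ (1/4 : ℝ) * rhoMin (Hᵀ * H))
    (u : Fin n → ℝ) (hu : u ⬝ᵥ u = 1) :
    let Hhat := H + E
    let Λ := (Hᵀ * H)⁻¹ *ᵥ (Hᵀ *ᵥ u)
    let tI := (E *ᵥ Λ) ⬝ᵥ (E *ᵥ Λ)
    let tII := ((Hhatᵀ * Hhat - Hᵀ * H) *ᵥ Λ) ⬝ᵥ ((Hhatᵀ * Hhat - Hᵀ * H) *ᵥ Λ)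
    let w3 := H *ᵥ ((Hᵀ * H)⁻¹ *ᵥ (Eᵀ *ᵥ u))
    let tIII := w3 ⬝ᵥ w3
    let pd := projMat H *ᵥ u - projMat Hhat *ᵥ u
    pd ⬝ᵥ pd ≤ 16 * tI + (16 + 32 * condNum (Hᵀ * H)) * (rhoMin (Hᵀ * H))⁻¹ * tII +
      (5 + 64 * condNum (Hᵀ * H) + 128 * (condNum (Hᵀ * H))^3) * tIII := by
  intro Hhat Λ tI tII w3 tIII pd
  rcases Nat.eq_zero_or_pos K with hK0 | hK
  · -- degenerate case K = 0 : everything is zero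
    subst hK0
    have hproj : ∀ M : Matrix (Fin n) (Fin 0) ℝ, projMat M = 0 := by
      intro M
      ext i j
      simp [projMat, Matrix.mul_apply]
    have hpd : pd = 0 := by
      show projMat H *ᵥ u - projMat Hhat *ᵥ u = 0
      rw [hproj, hproj]
      simp
    have htI : tI = 0 := by
      show (E *ᵥ Λ) ⬝ᵥ (E *ᵥ Λ) = 0
      have : E *ᵥ Λ = 0 := by ext i; simp [Matrix.mulVec, dotProduct]
      rw [this]; simp
    have htII : tII = 0 := by
      show _ ⬝ᵥ _ = (0:ℝ)
      simp [dotProduct]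
    have htIII : tIII = 0 := by
      show w3 ⬝ᵥ w3 = 0
      have : w3 = 0 := by
        show H *ᵥ _ = 0
        ext i; simp [Matrix.mulVec, dotProduct]
      rw [this]; simp
    rw [hpd, htI, htII, htIII]
    simp
  -- main case K > 0
  classical
  set A : Matrix (Fin K) (Fin K) ℝ := Hᵀ * H with hAdef
  set Ahat : Matrix (Fin K) (Fin K) ℝ := Hhatᵀ * Hhat with hAhatdef
  have hHhatdef : Hhat = H + E := rfl
  have hAherm : A.IsHermitian := transpose_mul_self_isHermitian' H
  have hAhatherm : Ahat.IsHermitian := transpose_mul_self_isHermitian' Hhat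
  have hEEherm : (Eᵀ * E).IsHermitian := transpose_mul_self_isHermitian' E
  set ρ := rhoMin A with hρdef
  set σ := rhoMax A with hσdef
  -- injectivity of H
  have hker : ∀ z : Fin K → ℝ, H *ᵥ z = 0 → z = 0 := by
    intro z hz
    have hH' : Module.finrank ℝ ↥(LinearMap.range H.mulVecLin) = K := hH
    have hrn := LinearMap.finrank_range_add_finrank_ker H.mulVecLin
    rw [hH', Module.finrank_fintype_fun_eq_card, Fintype.card_fin] at hrn
    have hker0 : Module.finrank ℝ ↥(LinearMap.ker H.mulVecLin) = 0 := by omega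
    have hbot : LinearMap.ker H.mulVecLin = ⊥ := Submodule.finrank_eq_zero.mp hker0
    have : z ∈ LinearMap.ker H.mulVecLin := by
      simp [LinearMap.mem_ker, Matrix.mulVecLin_apply, hz]
    rw [hbot] at this
    simpa using this
  -- A is positive definite
  have hApos : ∀ z : Fin K → ℝ, z ≠ 0 → 0 < z ⬝ᵥ (A *ᵥ z) := by
    intro z hz
    rw [hAdef, qform H z]
    rcases eq_or_lt_of_le (dot_self_nonneg' (H *ᵥ z)) with h | h
    · exact absurd (hker z (dotProduct_self_eq_zero.mp h.symm)) hz
    · exact h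
  have hApd : A.PosDef := Matrix.PosDef.of_dotProduct_mulVec_pos hAherm (fun z hz => by
    have hsz : star z = z := by simp
    rw [hsz]; exact hApos z hz)
  have hAdet : IsUnit A.det := (Matrix.isUnit_iff_isUnit_det _).mp hApd.isUnit
  have hAinv : A * A⁻¹ = 1 := Matrix.mul_nonsing_inv _ hAdet
  -- spectrum facts
  have hspec : spectrum ℝ A = Set.range hAherm.eigenvalues :=
    hAherm.spectrum_real_eq_range_eigenvalues
  have hfinA : (spectrum ℝ A).Finite := A.finite_real_spectrum
  have hneA : (spectrum ℝ A).Nonempty := by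
    rw [hspec]; exact ⟨hAherm.eigenvalues ⟨0, hK⟩, ⟨0, hK⟩, rfl⟩
  have hmin_mem : ρ ∈ spectrum ℝ A := hneA.csInf_mem hfinA
  have hρpos : 0 < ρ := by
    rw [hspec] at hmin_mem
    obtain ⟨i, hi⟩ := hmin_mem
    exact hi ▸ hApd.eigenvalues_pos i
  have hρσ : ρ ≤ σ := csInf_le_csSup hneA hfinA.bddBelow hfinA.bddAbove
  have hcond1 : 1 ≤ σ / ρ := (one_le_div hρpos).mpr hρσ
  -- E bound
  have hEb : ∀ z : Fin K → ℝ, (E *ᵥ z) ⬝ᵥ (E *ᵥ z) ≤ 1/4 * ρ * (z ⬝ᵥ z) := by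
    intro z
    have h1 := (quad_bounds (Eᵀ * E) hEEherm z).2.1
    rw [qform E z] at h1
    exact le_trans h1 (mul_le_mul_of_nonneg_right hE (dot_self_nonneg' z))
  -- H lower bound
  have hHb : ∀ z : Fin K → ℝ, ρ * (z ⬝ᵥ z) ≤ (H *ᵥ z) ⬝ᵥ (H *ᵥ z) := by
    intro z
    have h1 := (quad_bounds A hAherm z).1
    rwa [hAdef, qform H z] at h1
  -- key lower bound for Ahat
  have hkey : ∀ z : Fin K → ℝ, ρ/4 * (z ⬝ᵥ z) ≤ z ⬝ᵥ (Ahat *ᵥ z) := by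
    intro z
    have hexp : z ⬝ᵥ (Ahat *ᵥ z) =
        (H *ᵥ z) ⬝ᵥ (H *ᵥ z) + 2 * ((H *ᵥ z) ⬝ᵥ (E *ᵥ z)) + (E *ᵥ z) ⬝ᵥ (E *ᵥ z) := by
      rw [hAhatdef, qform Hhat z, hHhatdef, add_mulVec, add_dotProduct, dotProduct_add,
        dotProduct_add, dotProduct_comm (E *ᵥ z) (H *ᵥ z)]
      ring
    rw [hexp]
    have h := key_quad ((H *ᵥ z) ⬝ᵥ (H *ᵥ z)) ((E *ᵥ z) ⬝ᵥ (E *ᵥ z))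
      ((H *ᵥ z) ⬝ᵥ (E *ᵥ z)) (ρ/4 * (z ⬝ᵥ z))
      (dot_self_nonneg' _) (dot_self_nonneg' _)
      (mul_nonneg (le_of_lt (div_pos hρpos (by norm_num))) (dot_self_nonneg' z))
      (dotCS (H *ᵥ z) (E *ᵥ z))
      (by have := hHb z; linarith)
      (by have := hEb z; linarith)
    linarith
  -- Ahat positive definite and invertible
  have hAhpd : Ahat.PosDef := Matrix.PosDef.of_dotProduct_mulVec_pos hAhatherm (fun z hz => by
    have hsz : star z = z := by simp
    rw [hsz]
    have h1 := hkey z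
    have hq : 0 < z ⬝ᵥ z := by
      rcases eq_or_lt_of_le (dot_self_nonneg' z) with h | h
      · exact absurd (dotProduct_self_eq_zero.mp h.symm) hz
      · exact h
    nlinarith)
  have hAhdet : IsUnit Ahat.det := (Matrix.isUnit_iff_isUnit_det _).mp hAhpd.isUnit
  have hAhinv : Ahat * Ahat⁻¹ = 1 := Matrix.mul_nonsing_inv _ hAhdet
  -- contraction bound
  have hbound : ∀ x : Fin K → ℝ,
      (Hhat *ᵥ (Ahat⁻¹ *ᵥ x)) ⬝ᵥ (Hhat *ᵥ (Ahat⁻¹ *ᵥ x)) ≤ 4/ρ * (x ⬝ᵥ x) := by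
    intro x
    set yv := Ahat⁻¹ *ᵥ x with hyv
    have hAy : Ahat *ᵥ yv = x := by rw [hyv, mulVec_mulVec, hAhinv, one_mulVec]
    have hEq : (Hhat *ᵥ yv) ⬝ᵥ (Hhat *ᵥ yv) = yv ⬝ᵥ x := by
      rw [← qform Hhat yv, ← hAhatdef, hAy]
    have ht1 : ρ/4 * (yv ⬝ᵥ yv) ≤ yv ⬝ᵥ x := by
      have := hkey yv; rwa [hAy] at this
    have ht0 : 0 ≤ yv ⬝ᵥ x :=
      le_trans (mul_nonneg (le_of_lt (div_pos hρpos (by norm_num)))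
        (dot_self_nonneg' yv)) ht1
    rw [hEq]
    exact contract_arith (yv ⬝ᵥ x) (yv ⬝ᵥ yv) (x ⬝ᵥ x) ρ hρpos (dot_self_nonneg' x)
      ht1 (dotCS yv x) ht0
  -- Λ facts
  have hΛdef : Λ = A⁻¹ *ᵥ (Hᵀ *ᵥ u) := rfl
  have hAΛ : A *ᵥ Λ = Hᵀ *ᵥ u := by rw [hΛdef, mulVec_mulVec, hAinv, one_mulVec]
  -- third-term vector
  set w0 : Fin K → ℝ := Eᵀ *ᵥ u with hw0
  set z0 : Fin K → ℝ := A⁻¹ *ᵥ w0 with hz0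
  have hAz0 : A *ᵥ z0 = w0 := by rw [hz0, mulVec_mulVec, hAinv, one_mulVec]
  have htIII_eq : tIII = z0 ⬝ᵥ (A *ᵥ z0) := by
    have hw3 : w3 = H *ᵥ z0 := rfl
    show w3 ⬝ᵥ w3 = _
    rw [hw3, ← qform H z0, ← hAdef]
  have hw0b : w0 ⬝ᵥ w0 ≤ σ * tIII := by
    have h3 := (quad_bounds A hAherm z0).2.2 (le_of_lt hρpos)
    rw [htIII_eq, ← hAz0]
    exact h3
  -- main algebraic identity
  have hid : pd = (-(E *ᵥ Λ)) + (Hhat *ᵥ (Ahat⁻¹ *ᵥ ((Ahat - A) *ᵥ Λ))) +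
      (-(Hhat *ᵥ (Ahat⁻¹ *ᵥ w0))) := by
    have hP1 : projMat H *ᵥ u = H *ᵥ Λ := by
      show (H * (Hᵀ * H)⁻¹ * Hᵀ) *ᵥ u = H *ᵥ Λ
      rw [← mulVec_mulVec, ← mulVec_mulVec]
    have hP2 : projMat Hhat *ᵥ u = Hhat *ᵥ (Ahat⁻¹ *ᵥ (Hhatᵀ *ᵥ u)) := by
      show (Hhat * (Hhatᵀ * Hhat)⁻¹ * Hhatᵀ) *ᵥ u = _
      rw [← mulVec_mulVec, ← mulVec_mulVec, ← hAhatdef]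
    have hHhatT : Hhatᵀ *ᵥ u = Hᵀ *ᵥ u + w0 := by
      rw [hHhatdef, transpose_add, add_mulVec, hw0]
    have e1 : (Ahat - A) *ᵥ Λ = Ahat *ᵥ Λ - Hᵀ *ᵥ u := by
      rw [sub_mulVec, hAΛ]
    have hAhinv' : Ahat⁻¹ * Ahat = 1 := Matrix.nonsing_inv_mul _ hAhdet
    have e2 : Ahat⁻¹ *ᵥ ((Ahat - A) *ᵥ Λ) = Λ - Ahat⁻¹ *ᵥ (Hᵀ *ᵥ u) := by
      rw [e1, mulVec_sub, mulVec_mulVec, hAhinv', one_mulVec]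
    have e3 : Hhat *ᵥ Λ = H *ᵥ Λ + E *ᵥ Λ := by rw [hHhatdef, add_mulVec]
    show projMat H *ᵥ u - projMat Hhat *ᵥ u = _
    rw [hP1, hP2, e2, hHhatT, mulVec_add Ahat⁻¹, mulVec_sub Hhat, mulVec_add Hhat, e3]
    abel
  -- assemble
  have htI_eq : tI = (E *ᵥ Λ) ⬝ᵥ (E *ᵥ Λ) := rfl
  have htII_eq : tII = ((Ahat - A) *ᵥ Λ) ⬝ᵥ ((Ahat - A) *ᵥ Λ) := by
    rw [hAhatdef, hAdef]
  have htI0 : 0 ≤ tI := htI_eq ▸ dot_self_nonneg' _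
  have htII0 : 0 ≤ tII := htII_eq ▸ dot_self_nonneg' _
  have htIII0 : 0 ≤ tIII := by
    have : tIII = w3 ⬝ᵥ w3 := rfl
    exact this ▸ dot_self_nonneg' _
  have hsplit : pd ⬝ᵥ pd ≤ 3 * (tI + (4/ρ) * tII + (4/ρ) * (σ * tIII)) := by
    rw [hid]
    refine le_trans (dot3 _ _ _) ?_
    have ha : (-(E *ᵥ Λ)) ⬝ᵥ (-(E *ᵥ Λ)) = tI := by
      rw [neg_dotProduct, dotProduct_neg, neg_neg, htI_eq]
    have hb : (Hhat *ᵥ (Ahat⁻¹ *ᵥ ((Ahat - A) *ᵥ Λ))) ⬝ᵥ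
        (Hhat *ᵥ (Ahat⁻¹ *ᵥ ((Ahat - A) *ᵥ Λ))) ≤ 4/ρ * tII := by
      rw [htII_eq]
      exact hbound _
    have hc : (-(Hhat *ᵥ (Ahat⁻¹ *ᵥ w0))) ⬝ᵥ (-(Hhat *ᵥ (Ahat⁻¹ *ᵥ w0))) ≤
        4/ρ * (σ * tIII) := by
      rw [neg_dotProduct, dotProduct_neg, neg_neg]
      exact le_trans (hbound w0) (mul_le_mul_of_nonneg_left hw0b
        (le_of_lt (div_pos (by norm_num) hρpos)))
    rw [ha]
    linarith
  have hcond : condNum (Hᵀ * H) = σ / ρ := rfl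
  rw [hcond]
  have heq : 3 * (tI + (4/ρ) * tII + (4/ρ) * (σ * tIII)) =
      3*tI + 3*(4*ρ⁻¹)*tII + 3*(4*(σ/ρ))*tIII := by
    ring
  have hfin := final_const tI tII tIII (σ/ρ) ρ⁻¹ htI0 htII0 htIII0 hcond1
    (inv_nonneg.mpr (le_of_lt hρpos))
  calc pd ⬝ᵥ pd ≤ 3 * (tI + (4/ρ) * tII + (4/ρ) * (σ * tIII)) := hsplit
    _ = 3*tI + 3*(4*ρ⁻¹)*tII + 3*(4*(σ/ρ))*tIII := heq
    _ ≤ 16*tI + (16+32*(σ/ρ))*ρ⁻¹*tII + (5+64*(σ/ρ)+128*(σ/ρ)^3)*tIII := hfin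
end

section
/- Let H, E ∈ ℝ^{n×K} with H of full rank K, set Ĥ = H + E, and let α > 0 satisfy Σ_{j=1}^{K} ‖E_{·,j}‖² ≤ α/2, where E_{·,j} denotes the j-th column of E. Then the following four inequalities hold: (i) ρ_min(ĤᵀĤ + αI_K) ≥ ρ_min(HᵀH)/2; (ii) ρ(ĤᵀĤ − HᵀH) ≤ 2·(α + ρ(HᵀH)), where for a symmetric matrix M, ρ(M) denotes sup over unit vectors x of |xᵀMx|; (iii) ρ(EᵀE) ≤ α/2; (iv) ρ(ĤᵀĤ − HᵀH)² / ρ_min(HᵀH + αI_K)² ≤ 32·Cond(HᵀH)². -/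
open MeasureTheory ProbabilityTheory Matrix

section EigenHelpers
variable {n K : ℕ}

variable {n K : ℕ}

lemma tmul_herm (M : Matrix (Fin n) (Fin K) ℝ) : (Mᵀ * M).IsHermitian := by
  rw [← conjTranspose_eq_transpose_of_trivial]
  exact isHermitian_conjTranspose_mul_self M

lemma dot_sq_le (a b : Fin n → ℝ) : (a ⬝ᵥ b)^2 ≤ (a ⬝ᵥ a) * (b ⬝ᵥ b) := by
  simpa [dotProduct, sq] using
    Finset.sum_mul_sq_le_sq_mul_sq Finset.univ a b

lemma dot_self_nonneg (a : Fin n → ℝ) : 0 ≤ a ⬝ᵥ a :=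
  Finset.sum_nonneg fun i _ => mul_self_nonneg _

lemma dot_tmul (M : Matrix (Fin n) (Fin K) ℝ) (x : Fin K → ℝ) :
    x ⬝ᵥ ((Mᵀ * M) *ᵥ x) = (M *ᵥ x) ⬝ᵥ (M *ᵥ x) := by
  rw [← mulVec_mulVec, dotProduct_mulVec, vecMul_transpose]

lemma frob_bound (E : Matrix (Fin n) (Fin K) ℝ) (x : Fin K → ℝ) :
    (E *ᵥ x) ⬝ᵥ (E *ᵥ x) ≤ (∑ j, ∑ i, (E i j)^2) * (x ⬝ᵥ x) := by
  rw [Finset.sum_comm, Finset.sum_mul]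
  have : ∀ i, (E *ᵥ x) i * (E *ᵥ x) i ≤ (∑ j, (E i j)^2) * (x ⬝ᵥ x) := by
    intro i
    have h := Finset.sum_mul_sq_le_sq_mul_sq Finset.univ (E i) x
    simpa [Matrix.mulVec, dotProduct, sq] using h
  exact Finset.sum_le_sum fun i _ => this i

lemma unit_eigen {A : Matrix (Fin K) (Fin K) ℝ} (hA : A.IsHermitian) {μ : ℝ}
    (hμ : μ ∈ spectrum ℝ A) :
    ∃ v : Fin K → ℝ, v ⬝ᵥ v = 1 ∧ v ⬝ᵥ (A *ᵥ v) = μ := by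
  rw [hA.spectrum_real_eq_range_eigenvalues] at hμ
  obtain ⟨i, rfl⟩ := hμ
  set v : Fin K → ℝ := ⇑(hA.eigenvectorBasis i) with hv
  have h1 : ‖hA.eigenvectorBasis i‖ = 1 := hA.eigenvectorBasis.orthonormal.1 i
  have h2 : v ⬝ᵥ v = ‖hA.eigenvectorBasis i‖ ^ 2 := by
    rw [← real_inner_self_eq_norm_sq]
    simp only [hv, dotProduct, PiLp.inner_apply, RCLike.inner_apply, conj_trivial, mul_comm]
  have hunit : v ⬝ᵥ v = 1 := by rw [h2, h1]; norm_num
  refine ⟨v, hunit, ?_⟩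
  rw [hv, hA.mulVec_eigenvectorBasis i, dotProduct_smul, smul_eq_mul, ← hv, hunit, mul_one]

lemma quad_repr {A : Matrix (Fin K) (Fin K) ℝ} (hA : A.IsHermitian) (x : Fin K → ℝ) :
    ∃ y : Fin K → ℝ, y ⬝ᵥ y = x ⬝ᵥ x ∧
      x ⬝ᵥ (A *ᵥ x) = ∑ i, hA.eigenvalues i * (y i)^2 := by
  set U : Matrix (Fin K) (Fin K) ℝ := (hA.eigenvectorUnitary : Matrix (Fin K) (Fin K) ℝ) with hU
  have hstar : star (U : Matrix (Fin K) (Fin K) ℝ) = Uᵀ := by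
    rw [Matrix.star_eq_conjTranspose, conjTranspose_eq_transpose_of_trivial]
  have hUU : U * Uᵀ = 1 := by
    rw [← hstar]; exact (Matrix.mem_unitaryGroup_iff).mp hA.eigenvectorUnitary.2
  set y : Fin K → ℝ := Uᵀ *ᵥ x with hy
  have key : ∀ z : Fin K → ℝ, x ⬝ᵥ (U *ᵥ z) = y ⬝ᵥ z := by
    intro z
    rw [dotProduct_mulVec, hy]
    congr 1
    rw [← Matrix.mulVec_transpose]
  refine ⟨y, ?_, ?_⟩
  · have : U *ᵥ y = x := by
      rw [hy, mulVec_mulVec, hUU, one_mulVec]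
    calc y ⬝ᵥ y = x ⬝ᵥ (U *ᵥ y) := by rw [key y]
    _ = x ⬝ᵥ x := by rw [this]
  · have hspec : A = U * Matrix.diagonal hA.eigenvalues * Uᵀ := by
      have h := hA.spectral_theorem
      simp only [Unitary.conjStarAlgAut_apply, Unitary.coe_star, ← hU, hstar] at h
      rw [RCLike.ofReal_real_eq_id, Function.id_comp] at h
      exact h
    have hq : x ⬝ᵥ (A *ᵥ x) = x ⬝ᵥ ((U * Matrix.diagonal hA.eigenvalues * Uᵀ) *ᵥ x) := by
      rw [← hspec]
    rw [hq, ← mulVec_mulVec, ← mulVec_mulVec, key, ← hy]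
    simp only [dotProduct, Matrix.mulVec_diagonal]
    exact Finset.sum_congr rfl fun i _ => by ring

lemma rayleigh_le {A : Matrix (Fin K) (Fin K) ℝ} (hA : A.IsHermitian) {b : ℝ}
    (hb : ∀ i, hA.eigenvalues i ≤ b) {x : Fin K → ℝ} (hx : x ⬝ᵥ x = 1) :
    x ⬝ᵥ (A *ᵥ x) ≤ b := by
  obtain ⟨y, hyy, hrepr⟩ := quad_repr hA x
  rw [hrepr]
  have h1 : ∑ i, hA.eigenvalues i * (y i)^2 ≤ ∑ i, b * (y i)^2 :=
    Finset.sum_le_sum fun i _ => mul_le_mul_of_nonneg_right (hb i) (sq_nonneg _)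
  have h2 : ∑ i, b * (y i)^2 = b := by
    rw [← Finset.mul_sum]
    have hsum : ∑ i, (y i)^2 = 1 := by
      rw [← hx, ← hyy]; simp [dotProduct, sq]
    rw [hsum, mul_one]
  linarith

lemma rayleigh_ge {A : Matrix (Fin K) (Fin K) ℝ} (hA : A.IsHermitian) {b : ℝ}
    (hb : ∀ i, b ≤ hA.eigenvalues i) {x : Fin K → ℝ} (hx : x ⬝ᵥ x = 1) :
    b ≤ x ⬝ᵥ (A *ᵥ x) := by
  obtain ⟨y, hyy, hrepr⟩ := quad_repr hA x
  rw [hrepr]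
  have h1 : ∑ i, b * (y i)^2 ≤ ∑ i, hA.eigenvalues i * (y i)^2 :=
    Finset.sum_le_sum fun i _ => mul_le_mul_of_nonneg_right (hb i) (sq_nonneg _)
  have h2 : ∑ i, b * (y i)^2 = b := by
    rw [← Finset.mul_sum]
    have hsum : ∑ i, (y i)^2 = 1 := by
      rw [← hx, ← hyy]; simp [dotProduct, sq]
    rw [hsum, mul_one]
  linarith

end EigenHelpers

set_option maxHeartbeats 1600000 in
/-- Eigenvalue controls for the regularized Gram matrix (Proposition `EigenControl`). -/
theorem regularized_eigen_control (n K : ℕ) (H E : Matrix (Fin n) (Fin K) ℝ)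
    (hH : H.rank = K) (α : ℝ) (hα : 0 < α)
    (hE : ∑ j, ∑ i, (E i j)^2 ≤ α / 2) :
    rhoMin ((H + E)ᵀ * (H + E) + α • (1 : Matrix (Fin K) (Fin K) ℝ)) ≥
        rhoMin (Hᵀ * H) / 2 ∧
      rhoAbs ((H + E)ᵀ * (H + E) - Hᵀ * H) ≤ 2 * (α + rhoMax (Hᵀ * H)) ∧
      rhoMax (Eᵀ * E) ≤ α / 2 ∧
      (rhoAbs ((H + E)ᵀ * (H + E) - Hᵀ * H))^2 /
          (rhoMin (Hᵀ * H + α • (1 : Matrix (Fin K) (Fin K) ℝ)))^2 ≤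
        32 * (condNum (Hᵀ * H))^2 := by
  rcases Nat.eq_zero_or_pos K with hK | hK
  · subst hK
    have hherm : ∀ M : Matrix (Fin 0) (Fin 0) ℝ, M.IsHermitian := fun M =>
      Subsingleton.elim _ _
    have hspec : ∀ M : Matrix (Fin 0) (Fin 0) ℝ, spectrum ℝ M = ∅ := by
      intro M
      rw [(hherm M).spectrum_real_eq_range_eigenvalues]
      simp
    have hset : ∀ M : Matrix (Fin 0) (Fin 0) ℝ,
        {r | ∃ x : Fin 0 → ℝ, x ⬝ᵥ x = 1 ∧ r = |x ⬝ᵥ (M *ᵥ x)|} = ∅ := by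
      intro M
      ext r
      simp [dotProduct]
    simp only [rhoMin, rhoMax, rhoAbs, condNum, hspec, hset, Real.sInf_empty, Real.sSup_empty]
    norm_num
    constructor
    · positivity
    · positivity
  · have hNE : Nonempty (Fin K) := Fin.pos_iff_nonempty.mp hK
    -- Facts about A = Hᵀ * H
    have hA : (Hᵀ * H).IsHermitian := tmul_herm H
    have hPSD : (Hᵀ * H).PosSemidef := by
      rw [← conjTranspose_eq_transpose_of_trivial]
      exact posSemidef_conjTranspose_mul_self H
    have hrank : (Hᵀ * H).rank = K := by rw [rank_transpose_mul_self, hH]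
    have heig_pos : ∀ i, 0 < hA.eigenvalues i := by
      intro i
      rcases (hPSD.eigenvalues_nonneg i).lt_or_eq with h | h
      · exact h
      · exfalso
        have hcard := hA.rank_eq_card_non_zero_eigs
        rw [hrank] at hcard
        have hlt : Fintype.card {j // hA.eigenvalues j ≠ 0} < Fintype.card (Fin K) :=
          Fintype.card_subtype_lt (x := i) (fun hcon => hcon h.symm)
        rw [Fintype.card_fin] at hlt
        omega
    have hAspec : spectrum ℝ (Hᵀ * H) = Set.range hA.eigenvalues :=
      hA.spectrum_real_eq_range_eigenvalues
    set q := rhoMin (Hᵀ * H) with hq_def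
    set ρ := rhoMax (Hᵀ * H) with hρ_def
    have hq_le : ∀ i, q ≤ hA.eigenvalues i := fun i => by
      rw [hq_def, rhoMin, hAspec]
      exact csInf_le (Set.finite_range _).bddBelow ⟨i, rfl⟩
    have hρ_ge : ∀ i, hA.eigenvalues i ≤ ρ := fun i => by
      rw [hρ_def, rhoMax, hAspec]
      exact le_csSup (Set.finite_range _).bddAbove ⟨i, rfl⟩
    have hq_mem : q ∈ Set.range hA.eigenvalues := by
      rw [hq_def, rhoMin, hAspec]
      exact (Set.range_nonempty _).csInf_mem (Set.finite_range _)
    obtain ⟨i0, hi0⟩ := hq_mem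
    have hq_pos : 0 < q := hi0 ▸ heig_pos i0
    have hqρ : q ≤ ρ := le_trans (hq_le i0) (hρ_ge i0)
    have hρ_pos : 0 < ρ := lt_of_lt_of_le hq_pos hqρ
    have hF0 : (0:ℝ) ≤ ∑ j, ∑ i, (E i j)^2 :=
      Finset.sum_nonneg fun j _ => Finset.sum_nonneg fun i _ => sq_nonneg _
    -- Part (i)
    have part1 : rhoMin ((H + E)ᵀ * (H + E) + α • (1 : Matrix (Fin K) (Fin K) ℝ)) ≥ q / 2 := by
      have hBh : ((H + E)ᵀ * (H + E) + α • (1 : Matrix (Fin K) (Fin K) ℝ)).IsHermitian := by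
        refine (tmul_herm _).add ?_
        unfold Matrix.IsHermitian
        rw [conjTranspose_smul, conjTranspose_one, star_trivial]
      rw [ge_iff_le, rhoMin]
      apply le_csInf
      · rw [hBh.spectrum_real_eq_range_eigenvalues]
        exact Set.range_nonempty _
      · intro μ hμ
        obtain ⟨v, hv1, hvμ⟩ := unit_eigen hBh hμ
        rw [← hvμ]
        have hcalc : v ⬝ᵥ (((H + E)ᵀ * (H + E) + α • (1 : Matrix (Fin K) (Fin K) ℝ)) *ᵥ v)
            = (H *ᵥ v + E *ᵥ v) ⬝ᵥ (H *ᵥ v + E *ᵥ v) + α := by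
          rw [add_mulVec, dotProduct_add, dot_tmul, Matrix.add_mulVec,
            smul_mulVec, one_mulVec, dotProduct_smul, smul_eq_mul, hv1, mul_one]
        rw [hcalc]
        set a := H *ᵥ v
        set b := E *ᵥ v
        have hexp : (a + b) ⬝ᵥ (a + b) = a ⬝ᵥ a + 2*(a ⬝ᵥ b) + b ⬝ᵥ b := by
          rw [dotProduct_add, add_dotProduct, add_dotProduct, dotProduct_comm b a]
          ring
        rw [hexp]
        have hs : q ≤ a ⬝ᵥ a := by
          rw [← dot_tmul]
          exact rayleigh_ge hA hq_le hv1
        have ht : b ⬝ᵥ b ≤ α/2 := by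
          calc b ⬝ᵥ b ≤ (∑ j, ∑ i, (E i j)^2) * (v ⬝ᵥ v) := frob_bound E v
          _ = ∑ j, ∑ i, (E i j)^2 := by rw [hv1, mul_one]
          _ ≤ α/2 := hE
        have hp := dot_sq_le a b
        have ht0 := dot_self_nonneg b
        have hs0 := dot_self_nonneg a
        nlinarith [sq_nonneg ((a ⬝ᵥ a)/2 - 2*(b ⬝ᵥ b)),
          sq_nonneg ((a ⬝ᵥ a)/2 + 2*(b ⬝ᵥ b) + 2*(a ⬝ᵥ b))]
    -- Part (ii)
    have part2 : rhoAbs ((H + E)ᵀ * (H + E) - Hᵀ * H) ≤ 2 * (α + ρ) := by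
      rw [rhoAbs]
      apply Real.sSup_le
      · rintro r ⟨x, hx1, rfl⟩
        have hcalc : x ⬝ᵥ (((H + E)ᵀ * (H + E) - Hᵀ * H) *ᵥ x)
            = (H *ᵥ x + E *ᵥ x) ⬝ᵥ (H *ᵥ x + E *ᵥ x) - (H *ᵥ x) ⬝ᵥ (H *ᵥ x) := by
          rw [sub_mulVec, dotProduct_sub, dot_tmul, dot_tmul, Matrix.add_mulVec]
        rw [hcalc]
        set a := H *ᵥ x
        set b := E *ᵥ x
        have hexp : (a + b) ⬝ᵥ (a + b) - a ⬝ᵥ a = 2*(a ⬝ᵥ b) + b ⬝ᵥ b := by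
          rw [dotProduct_add, add_dotProduct, add_dotProduct, dotProduct_comm b a]
          ring
        rw [hexp]
        have hs : a ⬝ᵥ a ≤ ρ := by
          rw [← dot_tmul]
          exact rayleigh_le hA hρ_ge hx1
        have ht : b ⬝ᵥ b ≤ α/2 := by
          calc b ⬝ᵥ b ≤ (∑ j, ∑ i, (E i j)^2) * (x ⬝ᵥ x) := frob_bound E x
          _ = ∑ j, ∑ i, (E i j)^2 := by rw [hx1, mul_one]
          _ ≤ α/2 := hE
        have hp := dot_sq_le a b
        have ht0 := dot_self_nonneg b
        have hs0 := dot_self_nonneg a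
        rw [abs_le]
        constructor
        · nlinarith [sq_nonneg (a ⬝ᵥ a - b ⬝ᵥ b), sq_nonneg (a ⬝ᵥ a + b ⬝ᵥ b + 2*(a ⬝ᵥ b))]
        · nlinarith [sq_nonneg (a ⬝ᵥ a - b ⬝ᵥ b), sq_nonneg (a ⬝ᵥ a + b ⬝ᵥ b - 2*(a ⬝ᵥ b))]
      · positivity
    -- Part (iii)
    have part3 : rhoMax (Eᵀ * E) ≤ α / 2 := by
      have hEh : (Eᵀ * E).IsHermitian := tmul_herm E
      rw [rhoMax]
      apply Real.sSup_le
      · intro μ hμ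
        obtain ⟨v, hv1, hvμ⟩ := unit_eigen hEh hμ
        rw [← hvμ, dot_tmul]
        calc (E *ᵥ v) ⬝ᵥ (E *ᵥ v) ≤ (∑ j, ∑ i, (E i j)^2) * (v ⬝ᵥ v) := frob_bound E v
        _ = ∑ j, ∑ i, (E i j)^2 := by rw [hv1, mul_one]
        _ ≤ α/2 := hE
      · positivity
    -- Part (iv)
    refine ⟨part1, part2, part3, ?_⟩
    set r := rhoAbs ((H + E)ᵀ * (H + E) - Hᵀ * H) with hr_def
    have hr0 : 0 ≤ r := by
      rw [hr_def, rhoAbs]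
      apply Real.sSup_nonneg
      rintro x ⟨y, hy, rfl⟩
      exact abs_nonneg _
    set m := rhoMin (Hᵀ * H + α • (1 : Matrix (Fin K) (Fin K) ℝ)) with hm_def
    have hm : q + α ≤ m := by
      have hBh : (Hᵀ * H + α • (1 : Matrix (Fin K) (Fin K) ℝ)).IsHermitian := by
        refine hA.add ?_
        unfold Matrix.IsHermitian
        rw [conjTranspose_smul, conjTranspose_one, star_trivial]
      rw [hm_def, rhoMin]
      apply le_csInf
      · rw [hBh.spectrum_real_eq_range_eigenvalues]
        exact Set.range_nonempty _
      · intro μ hμ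
        obtain ⟨v, hv1, hvμ⟩ := unit_eigen hBh hμ
        rw [← hvμ]
        have hcalc : v ⬝ᵥ ((Hᵀ * H + α • (1 : Matrix (Fin K) (Fin K) ℝ)) *ᵥ v)
            = v ⬝ᵥ ((Hᵀ * H) *ᵥ v) + α := by
          rw [add_mulVec, dotProduct_add, smul_mulVec, one_mulVec, dotProduct_smul,
            smul_eq_mul, hv1, mul_one]
        rw [hcalc]
        have := rayleigh_ge hA hq_le hv1
        linarith
    have hm_pos : 0 < m := lt_of_lt_of_le (by positivity) hm
    clear_value q ρ r m
    rw [condNum, ← hq_def, ← hρ_def]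
    rw [div_pow, div_le_iff₀ (by positivity), mul_comm (32 * (ρ^2 / q^2)) (m^2),
      ← mul_div_assoc, ← mul_div_assoc, le_div_iff₀ (by positivity)]
    have hrq : r * q ≤ 2 * (ρ * m) := by
      have h1 : r * q ≤ (2 * (α + ρ)) * q := mul_le_mul_of_nonneg_right part2 hq_pos.le
      have h2 : (α + ρ) * q ≤ ρ * (α + q) := by nlinarith
      have h3 : ρ * (α + q) ≤ ρ * m := by nlinarith
      nlinarith
    have h4 : (r * q)^2 ≤ (2 * (ρ * m))^2 :=
      pow_le_pow_left₀ (mul_nonneg hr0 hq_pos.le) hrq 2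
    nlinarith [sq_nonneg (ρ * m), h4]
end

section
/- Let H ∈ ℝ^{n×K} have full rank K and let α ≥ 0. Then |||P_{[H]_α} − P_{[H]}|||² ≤ α / ρ_min(HᵀH), where P_{[H]} = H(HᵀH)⁻¹Hᵀ and P_{[H]_α} = H(HᵀH + αI_K)⁻¹Hᵀ. -/
open MeasureTheory ProbabilityTheory Matrix

namespace RegBiasAux

variable {n K : ℕ}

lemma quadform_eq (W : Matrix (Fin n) (Fin K) ℝ) (d : Fin K → ℝ) (x : Fin n → ℝ) :
    x ⬝ᵥ ((W * diagonal d * Wᵀ) *ᵥ x) = ∑ i, d i * (Wᵀ *ᵥ x) i ^ 2 := by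
  rw [← Matrix.mulVec_mulVec, ← Matrix.mulVec_mulVec, Matrix.dotProduct_mulVec,
    ← Matrix.mulVec_transpose]
  simp only [dotProduct, Matrix.mulVec_diagonal]
  exact Finset.sum_congr rfl fun i _ => by ring

lemma sandwich_mul (U : Matrix (Fin K) (Fin K) ℝ) (hU : star U * U = 1) (d e : Fin K → ℝ) :
    (U * diagonal d * star U) * (U * diagonal e * star U)
      = U * diagonal (fun i => d i * e i) * star U := by
  simp only [Matrix.mul_assoc]
  rw [← Matrix.mul_assoc (star U) U, hU, Matrix.one_mul,
    ← Matrix.mul_assoc (diagonal d) (diagonal e), diagonal_mul_diagonal]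

lemma sandwich_sub (W : Matrix (Fin n) (Fin K) ℝ) (d e : Fin K → ℝ) :
    W * diagonal d * Wᵀ - W * diagonal e * Wᵀ = W * diagonal (fun i => d i - e i) * Wᵀ := by
  rw [(diagonal_sub d e).symm.trans (by rfl), Matrix.mul_sub, Matrix.sub_mul]

lemma sandwich_sandwich (W : Matrix (Fin n) (Fin K) ℝ) (μ d e : Fin K → ℝ)
    (hW : Wᵀ * W = diagonal μ) :
    (W * diagonal d * Wᵀ) * (W * diagonal e * Wᵀ)
      = W * diagonal (fun i => d i * μ i * e i) * Wᵀ := by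
  simp only [Matrix.mul_assoc]
  rw [← Matrix.mul_assoc Wᵀ W, hW, ← Matrix.mul_assoc (diagonal μ) (diagonal e),
    diagonal_mul_diagonal, ← Matrix.mul_assoc (diagonal d), diagonal_mul_diagonal]
  congr 2
  funext i
  ring


lemma coef_bound {a r m : ℝ} (ha : 0 ≤ a) (hr : 0 < r) (hm : 0 < m) (hrm : r ≤ m) :
    ((m + a)⁻¹ - m⁻¹) * m * ((m + a)⁻¹ - m⁻¹) ≤ (a / r) * m⁻¹ := by
  have hma : 0 < m + a := by linarith
  have h1 : ((m + a)⁻¹ - m⁻¹) * m * ((m + a)⁻¹ - m⁻¹) = a ^ 2 / (m * (m + a) ^ 2) := by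
    field_simp
    ring
  have h2 : (a / r) * m⁻¹ = a / (r * m) := by field_simp
  rw [h1, h2, div_le_div_iff₀ (by positivity) (by positivity)]
  nlinarith [mul_nonneg (mul_nonneg ha hm.le)
      (add_nonneg (add_nonneg (sq_nonneg m) (mul_nonneg hm.le ha)) (sq_nonneg a)),
    mul_le_mul_of_nonneg_left hrm (mul_nonneg ha ha), hm.le, hr.le]

lemma le_of_sq_le_mul {s t : ℝ} (hs : 0 ≤ s) (ht : 0 ≤ t) (h : s ^ 2 ≤ t * s) : s ≤ t := by
  rcases hs.eq_or_lt with h0 | h0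
  · rw [← h0]; exact ht
  · nlinarith

lemma dot_self_mulVec {m : ℕ} (M : Matrix (Fin m) (Fin m) ℝ) (hM : Mᵀ = M) (x : Fin m → ℝ) :
    (M *ᵥ x) ⬝ᵥ (M *ᵥ x) = x ⬝ᵥ ((M * M) *ᵥ x) := by
  rw [← Matrix.mulVec_mulVec, Matrix.dotProduct_mulVec x, ← Matrix.mulVec_transpose, hM]

lemma sandwich_add (U : Matrix (Fin K) (Fin K) ℝ) (d e : Fin K → ℝ) :
    U * diagonal d * star U + U * diagonal e * star U
      = U * diagonal (fun i => d i + e i) * star U := by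
  rw [(diagonal_add d e).symm.trans (by rfl), Matrix.mul_add, Matrix.add_mul]

lemma dotProduct_self_norm (z : EuclideanSpace ℝ (Fin n)) :
    ‖z‖ = Real.sqrt ((WithLp.equiv 2 (Fin n → ℝ) z) ⬝ᵥ (WithLp.equiv 2 (Fin n → ℝ) z)) := by
  rw [EuclideanSpace.norm_eq]
  congr 1
  exact Finset.sum_congr rfl fun i _ => by
    rw [Real.norm_eq_abs, sq_abs, sq]
    rfl

end RegBiasAux


open RegBiasAux in
/-- Bias induced by the Ridge regularization of the projection operator. -/
theorem regularization_bias_bound (n K : ℕ) (H : Matrix (Fin n) (Fin K) ℝ)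
    (hH : H.rank = K) (α : ℝ) (hα : 0 ≤ α) :
    (opNorm (projMatReg H α - projMat H))^2 ≤ α / rhoMin (Hᵀ * H) := by
  by_cases hK0 : K = 0
  · subst hK0
    have hD : projMatReg H α - projMat H = 0 := by
      ext i j
      simp [projMat, projMatReg, Matrix.mul_apply]
    have h2 : spectrum ℝ (Hᵀ * H) = ∅ :=
      Set.eq_empty_of_forall_notMem fun r hr =>
        (spectrum.mem_iff.mp hr) (isUnit_of_subsingleton _)
    rw [hD, rhoMin, h2, Real.sInf_empty, div_zero]
    have h0 : opNorm (0 : Matrix (Fin n) (Fin n) ℝ) = 0 := by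
      rw [opNorm, map_zero, map_zero, norm_zero]
    rw [h0]
    norm_num
  -- main case
  haveI : Nonempty (Fin K) := ⟨⟨0, Nat.pos_of_ne_zero hK0⟩⟩
  have hrank : (Hᵀ * H).rank = K := by rw [Matrix.rank_transpose_mul_self]; exact hH
  -- injectivity of mulVec (Hᵀ * H)
  have hsurj : LinearMap.range (Hᵀ * H).mulVecLin = ⊤ := by
    apply Submodule.eq_top_of_finrank_eq
    rw [Matrix.rank] at hrank
    rw [hrank, Module.finrank_pi, Fintype.card_fin]
  have hinj : Function.Injective (Hᵀ * H).mulVecLin :=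
    LinearMap.injective_iff_surjective.mpr (LinearMap.range_eq_top.mp hsurj)
  have hHerm : (Hᵀ * H).IsHermitian := by
    have := Matrix.isHermitian_conjTranspose_mul_self H
    rwa [Matrix.conjTranspose_eq_transpose_of_trivial] at this
  -- positive definiteness
  have hPD : (Hᵀ * H).PosDef := by
    refine Matrix.PosDef.of_dotProduct_mulVec_pos hHerm fun x hx => ?_
    have h1 : star x ⬝ᵥ ((Hᵀ * H) *ᵥ x) = (H *ᵥ x) ⬝ᵥ (H *ᵥ x) := by
      rw [star_trivial, ← Matrix.mulVec_mulVec, Matrix.dotProduct_mulVec,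
        ← Matrix.mulVec_transpose, Matrix.transpose_transpose]
    rw [h1]
    have hHx : H *ᵥ x ≠ 0 := by
      intro h0
      apply hx
      apply hinj
      show (Hᵀ * H) *ᵥ x = (Hᵀ * H) *ᵥ 0
      rw [← Matrix.mulVec_mulVec, h0]
      simp
    have hnn : 0 ≤ (H *ᵥ x) ⬝ᵥ (H *ᵥ x) :=
      Finset.sum_nonneg fun j _ => mul_self_nonneg _
    exact hnn.lt_of_ne fun h => hHx (dotProduct_self_eq_zero.mp h.symm)
  have hμ : ∀ i, 0 < hHerm.eigenvalues i := hPD.eigenvalues_pos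
  set μ : Fin K → ℝ := hHerm.eigenvalues with hμdef
  set U : Matrix (Fin K) (Fin K) ℝ := ↑(hHerm.eigenvectorUnitary) with hUdef
  have hU1 : U * star U = 1 := Matrix.mem_unitaryGroup_iff.mp (hHerm.eigenvectorUnitary).2
  have hU2 : star U * U = 1 := Matrix.mem_unitaryGroup_iff'.mp (hHerm.eigenvectorUnitary).2
  have hspec : Hᵀ * H = U * diagonal μ * star U := by
    have h := hHerm.spectral_theorem
    simpa [RCLike.ofReal_real_eq_id] using h
  set W := H * U with hWdef
  have hUt : star U = Uᵀ := by
    rw [Matrix.star_eq_conjTranspose, Matrix.conjTranspose_eq_transpose_of_trivial]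
  have hWt : Wᵀ = star U * Hᵀ := by rw [hWdef, Matrix.transpose_mul, ← hUt]
  have hWtW : Wᵀ * W = diagonal μ := by
    rw [hWt, hWdef]
    calc (star U * Hᵀ) * (H * U) = star U * ((Hᵀ * H) * U) := by simp only [Matrix.mul_assoc]
      _ = star U * ((U * diagonal μ * star U) * U) := by rw [hspec]
      _ = diagonal μ := by
          simp only [Matrix.mul_assoc]
          rw [hU2, Matrix.mul_one, ← Matrix.mul_assoc (star U) U, hU2, Matrix.one_mul]
  have hμne : ∀ i, μ i ≠ 0 := fun i => (hμ i).ne'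
  have hAinv : (Hᵀ * H)⁻¹ = U * diagonal (fun i => (μ i)⁻¹) * star U := by
    apply Matrix.inv_eq_right_inv
    rw [hspec, sandwich_mul U hU2]
    have h1 : (fun i => μ i * (μ i)⁻¹) = fun _ : Fin K => (1:ℝ) :=
      funext fun i => mul_inv_cancel₀ (hμne i)
    rw [h1, Matrix.diagonal_one, Matrix.mul_one, hU1]
  have hμα : ∀ i, 0 < μ i + α := fun i => add_pos_of_pos_of_nonneg (hμ i) hα
  have hshift : Hᵀ * H + α • (1 : Matrix (Fin K) (Fin K) ℝ)
      = U * diagonal (fun i => μ i + α) * star U := by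
    have hc : diagonal (fun _ : Fin K => α) = U * diagonal (fun _ : Fin K => α) * star U := by
      rw [← Matrix.smul_one_eq_diagonal, Matrix.mul_smul, Matrix.mul_one, Matrix.smul_mul, hU1]
    rw [hspec, Matrix.smul_one_eq_diagonal, hc, sandwich_add]
  have hshiftinv : (Hᵀ * H + α • (1 : Matrix (Fin K) (Fin K) ℝ))⁻¹
      = U * diagonal (fun i => (μ i + α)⁻¹) * star U := by
    apply Matrix.inv_eq_right_inv
    rw [hshift, sandwich_mul U hU2]
    have h1 : (fun i => (μ i + α) * (μ i + α)⁻¹) = fun _ : Fin K => (1:ℝ) :=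
      funext fun i => mul_inv_cancel₀ (hμα i).ne'
    rw [h1, Matrix.diagonal_one, Matrix.mul_one, hU1]
  have hP : projMat H = W * diagonal (fun i => (μ i)⁻¹) * Wᵀ := by
    rw [projMat, hAinv, hWt, hWdef]
    simp only [Matrix.mul_assoc]
  have hPα : projMatReg H α = W * diagonal (fun i => (μ i + α)⁻¹) * Wᵀ := by
    rw [projMatReg, hshiftinv, hWt, hWdef]
    simp only [Matrix.mul_assoc]
  set g : Fin K → ℝ := fun i => (μ i + α)⁻¹ - (μ i)⁻¹ with hgdef
  have hDm : projMatReg H α - projMat H = W * diagonal g * Wᵀ := by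
    rw [hP, hPα, sandwich_sub]
  -- rho facts
  have hspecR : spectrum ℝ (Hᵀ * H) = Set.range μ := hHerm.spectrum_real_eq_range_eigenvalues
  have hρmem : rhoMin (Hᵀ * H) ∈ Set.range μ := by
    rw [rhoMin, hspecR]
    exact (Set.range_nonempty μ).csInf_mem (Set.finite_range μ)
  have hρpos : 0 < rhoMin (Hᵀ * H) := by
    obtain ⟨j, hj⟩ := hρmem; rw [← hj]; exact hμ j
  have hρle : ∀ i, rhoMin (Hᵀ * H) ≤ μ i := fun i => by
    rw [rhoMin, hspecR]; exact csInf_le (Set.finite_range μ).bddBelow ⟨i, rfl⟩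
  set ρ := rhoMin (Hᵀ * H) with hρdef
  clear_value ρ
  clear_value g
  clear_value W
  clear_value U
  clear_value μ
  have hc : 0 ≤ α / ρ := div_nonneg hα hρpos.le
  -- key pointwise bound
  have key : ∀ x : Fin n → ℝ,
      ((W * diagonal g * Wᵀ) *ᵥ x) ⬝ᵥ ((W * diagonal g * Wᵀ) *ᵥ x) ≤ (α / ρ) * (x ⬝ᵥ x) := by
    intro x
    have hsym : ∀ d : Fin K → ℝ, (W * diagonal d * Wᵀ)ᵀ = W * diagonal d * Wᵀ := by
      intro d
      simp only [Matrix.transpose_mul, Matrix.diagonal_transpose, Matrix.transpose_transpose,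
        Matrix.mul_assoc]
    have e1 : ∀ d : Fin K → ℝ,
        ((W * diagonal d * Wᵀ) *ᵥ x) ⬝ᵥ ((W * diagonal d * Wᵀ) *ᵥ x)
          = ∑ i, (d i * μ i * d i) * (Wᵀ *ᵥ x) i ^ 2 := by
      intro d
      rw [dot_self_mulVec _ (hsym d) x, sandwich_sandwich W μ d d hWtW, quadform_eq]
    set w := Wᵀ *ᵥ x with hw
    set s := ∑ i, (μ i)⁻¹ * w i ^ 2 with hs
    have hs0 : 0 ≤ s :=
      Finset.sum_nonneg fun i _ => mul_nonneg (inv_nonneg.mpr (hμ i).le) (sq_nonneg _)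
    have ht0 : 0 ≤ x ⬝ᵥ x := Finset.sum_nonneg fun i _ => mul_self_nonneg _
    have hsdef : x ⬝ᵥ ((W * diagonal (fun i => (μ i)⁻¹) * Wᵀ) *ᵥ x) = s := by
      rw [quadform_eq]
    have ePP : ((W * diagonal (fun i => (μ i)⁻¹) * Wᵀ) *ᵥ x)
        ⬝ᵥ ((W * diagonal (fun i => (μ i)⁻¹) * Wᵀ) *ᵥ x) = s := by
      rw [e1]
      exact Finset.sum_congr rfl fun i _ => by
        rw [inv_mul_cancel₀ (hμne i), one_mul]
    have hCS : s ^ 2 ≤ (x ⬝ᵥ x) * s := by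
      calc s ^ 2 = (∑ i, x i * ((W * diagonal (fun i => (μ i)⁻¹) * Wᵀ) *ᵥ x) i) ^ 2 := by
            rw [← hsdef]; rfl
        _ ≤ (∑ i, x i ^ 2) * (∑ i, ((W * diagonal (fun i => (μ i)⁻¹) * Wᵀ) *ᵥ x) i ^ 2) :=
            Finset.sum_mul_sq_le_sq_mul_sq _ _ _
        _ = (x ⬝ᵥ x) * s := by
            congr 1
            · exact Finset.sum_congr rfl fun i _ => (sq (x i)).symm ▸ rfl
            · rw [← ePP]; exact Finset.sum_congr rfl fun i _ => by rw [sq]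
    have hst : s ≤ x ⬝ᵥ x := le_of_sq_le_mul hs0 ht0 hCS
    have hcoef : ∀ i, g i * μ i * g i ≤ (α / ρ) * (μ i)⁻¹ := fun i => by
      rw [hgdef]
      exact coef_bound hα hρpos (hμ i) (hρle i)
    calc ((W * diagonal g * Wᵀ) *ᵥ x) ⬝ᵥ ((W * diagonal g * Wᵀ) *ᵥ x)
        = ∑ i, (g i * μ i * g i) * w i ^ 2 := e1 g
      _ ≤ ∑ i, ((α / ρ) * (μ i)⁻¹) * w i ^ 2 :=
          Finset.sum_le_sum fun i _ => mul_le_mul_of_nonneg_right (hcoef i) (sq_nonneg _)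
      _ = (α / ρ) * s := by
          rw [hs, Finset.mul_sum]
          exact Finset.sum_congr rfl fun i _ => by ring
      _ ≤ (α / ρ) * (x ⬝ᵥ x) := mul_le_mul_of_nonneg_left hst hc
  -- from quadratic bound to operator norm
  rw [hDm]
  have hop : opNorm (W * diagonal g * Wᵀ) ≤ Real.sqrt (α / ρ) := by
    rw [opNorm]
    refine ContinuousLinearMap.opNorm_le_bound _ (Real.sqrt_nonneg _) fun x => ?_
    have happ : (LinearMap.toContinuousLinearMap (toEuclideanLin (W * diagonal g * Wᵀ))) x
        = (WithLp.equiv 2 (Fin n → ℝ)).symm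
            ((W * diagonal g * Wᵀ) *ᵥ (WithLp.equiv 2 (Fin n → ℝ) x)) := rfl
    rw [happ, dotProduct_self_norm, dotProduct_self_norm x]
    set y := WithLp.equiv 2 (Fin n → ℝ) x with hy
    have hyy : WithLp.equiv 2 (Fin n → ℝ)
        ((WithLp.equiv 2 (Fin n → ℝ)).symm ((W * diagonal g * Wᵀ) *ᵥ y))
          = (W * diagonal g * Wᵀ) *ᵥ y := by simp
    rw [hyy]
    calc Real.sqrt (((W * diagonal g * Wᵀ) *ᵥ y) ⬝ᵥ ((W * diagonal g * Wᵀ) *ᵥ y))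
        ≤ Real.sqrt ((α / ρ) * (y ⬝ᵥ y)) := Real.sqrt_le_sqrt (key y)
      _ = Real.sqrt (α / ρ) * Real.sqrt (y ⬝ᵥ y) := Real.sqrt_mul hc _
  calc (opNorm (W * diagonal g * Wᵀ)) ^ 2 ≤ (Real.sqrt (α / ρ)) ^ 2 := by
        apply pow_le_pow_left₀ ?_ hop
        rw [opNorm]; exact norm_nonneg _
    _ = α / ρ := Real.sq_sqrt hc
end

section
/- Let H, E ∈ ℝ^{n×K} with H of full rank K, set Ĥ = H + E, and let α > 0 satisfy Σ_{j=1}^{K} ‖E_{·,j}‖² ≤ α/2, where E_{·,j} denotes the j-th column of E. For a unit vector u ∈ ℝⁿ define Λ_{u,α} = (HᵀH + αI_K)⁻¹Hᵀu and the quantities I_α = ‖E·Λ_{u,α}‖², II_α = ‖(ĤᵀĤ − HᵀH)·Λ_{u,α}‖², III_α = (Hᵀu − Ĥᵀu)ᵀ(HᵀH + αI_K)⁻¹(Hᵀu − Ĥᵀu). Then ‖P_{[H]_α}(u) − P_{[Ĥ]_α}(u)‖² ≤ 16·I_α + (8 + 64·Cond(HᵀH))·ρ_min(ĤᵀĤ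 + αI_K)⁻¹·II_α + (9 + 256·Cond(HᵀH) + 128·Cond(HᵀH)³)·III_α. -/
open MeasureTheory ProbabilityTheory Matrix

section ProofHelpers

section Helpers

lemma dotSelf_nonneg {K : ℕ} (v : Fin K → ℝ) : 0 ≤ v ⬝ᵥ v :=
  Finset.sum_nonneg fun i _ => mul_self_nonneg _

lemma dotSelf_pos {K : ℕ} {v : Fin K → ℝ} (hv : v ≠ 0) : 0 < v ⬝ᵥ v :=
  lt_of_le_of_ne (dotSelf_nonneg v) fun h => hv (dotProduct_self_eq_zero.mp h.symm)

lemma dot_mulVec_symm {m k : ℕ} (M : Matrix (Fin m) (Fin k) ℝ) (v : Fin m → ℝ) (w : Fin k → ℝ) :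
    v ⬝ᵥ (M *ᵥ w) = (Mᵀ *ᵥ v) ⬝ᵥ w := by
  rw [dotProduct_mulVec, mulVec_transpose]

lemma dot_cs_sq {K : ℕ} (v w : Fin K → ℝ) : (v ⬝ᵥ w)^2 ≤ (v ⬝ᵥ v) * (w ⬝ᵥ w) := by
  have h := Finset.sum_mul_sq_le_sq_mul_sq Finset.univ v w
  have h1 : ∀ (x : Fin K → ℝ), x ⬝ᵥ x = ∑ i, x i ^ 2 := by
    intro x; exact Finset.sum_congr rfl fun i _ => (sq (x i)).symm
  rw [dotProduct, h1, h1]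
  exact h

lemma exists_eigvec {K : ℕ} {A : Matrix (Fin K) (Fin K) ℝ} (hA : A.IsHermitian) {μ : ℝ}
    (hμ : μ ∈ spectrum ℝ A) : ∃ v : Fin K → ℝ, v ≠ 0 ∧ A *ᵥ v = μ • v := by
  rw [hA.spectrum_real_eq_range_eigenvalues] at hμ
  obtain ⟨i, rfl⟩ := hμ
  refine ⟨hA.eigenvectorBasis i, ?_, hA.mulVec_eigenvectorBasis i⟩
  have hne := hA.eigenvectorBasis.orthonormal.ne_zero i
  intro h
  apply hne
  ext j
  exact congrFun h j

lemma quad_sum_repr {K : ℕ} {A : Matrix (Fin K) (Fin K) ℝ} (hA : A.IsHermitian) (x : Fin K → ℝ) :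
    ∃ c : Fin K → ℝ, x ⬝ᵥ (A *ᵥ x) = ∑ i, hA.eigenvalues i * (c i)^2 ∧
      x ⬝ᵥ x = ∑ i, (c i)^2 := by
  set V : Matrix (Fin K) (Fin K) ℝ := (hA.eigenvectorUnitary : Matrix (Fin K) (Fin K) ℝ) with hV
  have hVmem := hA.eigenvectorUnitary.2
  have hV1 : V * star V = 1 := (Matrix.mem_unitaryGroup_iff).mp hVmem
  set c : Fin K → ℝ := (star V) *ᵥ x with hc
  have hstar : star V = Vᵀ := by
    rw [Matrix.star_eq_conjTranspose, conjTranspose_eq_transpose_of_trivial]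
  have key : ∀ w : Fin K → ℝ, x ⬝ᵥ (V *ᵥ w) = c ⬝ᵥ w := by
    intro w
    rw [hc, hstar, ← dot_mulVec_symm]
  refine ⟨c, ?_, ?_⟩
  · have hspec := hA.spectral_theorem
    have hD : (RCLike.ofReal ∘ hA.eigenvalues : Fin K → ℝ) = hA.eigenvalues := by
      ext i; simp
    rw [hD] at hspec
    calc x ⬝ᵥ (A *ᵥ x)
        = x ⬝ᵥ ((V * diagonal hA.eigenvalues * star V) *ᵥ x) := by
          rw [Unitary.conjStarAlgAut_apply] at hspec; rw [← hspec]
      _ = x ⬝ᵥ (V *ᵥ (diagonal hA.eigenvalues *ᵥ ((star V) *ᵥ x))) := by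
            rw [mulVec_mulVec, mulVec_mulVec]
      _ = c ⬝ᵥ (diagonal hA.eigenvalues *ᵥ c) := by rw [key, ← hc]
      _ = ∑ i, hA.eigenvalues i * (c i)^2 := by
            simp [dotProduct, mulVec_diagonal]
            exact Finset.sum_congr rfl fun i _ => by ring
  · calc x ⬝ᵥ x = x ⬝ᵥ ((V * star V) *ᵥ x) := by rw [hV1, one_mulVec]
      _ = c ⬝ᵥ c := by rw [← mulVec_mulVec, key, ← hc]
      _ = ∑ i, (c i)^2 := by
            simp [dotProduct]
            exact Finset.sum_congr rfl fun i _ => by ring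

variable {K : ℕ} {A : Matrix (Fin K) (Fin K) ℝ}

lemma spec_nonempty (hK : 0 < K) (hA : A.IsHermitian) : (spectrum ℝ A).Nonempty := by
  rw [hA.spectrum_real_eq_range_eigenvalues]
  exact ⟨hA.eigenvalues ⟨0, hK⟩, ⟨0, hK⟩, rfl⟩

lemma spec_bddAbove : BddAbove (spectrum ℝ A) :=
  (Matrix.finite_real_spectrum (A := A)).bddAbove

lemma spec_bddBelow : BddBelow (spectrum ℝ A) :=
  (Matrix.finite_real_spectrum (A := A)).bddBelow

lemma rayleigh_upper (hA : A.IsHermitian) (x : Fin K → ℝ) :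
    x ⬝ᵥ (A *ᵥ x) ≤ sSup (spectrum ℝ A) * (x ⬝ᵥ x) := by
  obtain ⟨c, h1, h2⟩ := quad_sum_repr hA x
  rw [h1, h2, Finset.mul_sum]
  refine Finset.sum_le_sum fun i _ => ?_
  refine mul_le_mul_of_nonneg_right ?_ (sq_nonneg _)
  exact le_csSup spec_bddAbove (by rw [hA.spectrum_real_eq_range_eigenvalues]; exact ⟨i, rfl⟩)

lemma rayleigh_lower (hA : A.IsHermitian) (x : Fin K → ℝ) :
    sInf (spectrum ℝ A) * (x ⬝ᵥ x) ≤ x ⬝ᵥ (A *ᵥ x) := by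
  obtain ⟨c, h1, h2⟩ := quad_sum_repr hA x
  rw [h1, h2, Finset.mul_sum]
  refine Finset.sum_le_sum fun i _ => ?_
  refine mul_le_mul_of_nonneg_right ?_ (sq_nonneg _)
  exact csInf_le spec_bddBelow (by rw [hA.spectrum_real_eq_range_eigenvalues]; exact ⟨i, rfl⟩)

lemma spec_elt_ge (hA : A.IsHermitian) {m : ℝ} (h : ∀ x, m * (x ⬝ᵥ x) ≤ x ⬝ᵥ (A *ᵥ x))
    {μ : ℝ} (hμ : μ ∈ spectrum ℝ A) : m ≤ μ := by
  obtain ⟨v, hv, hev⟩ := exists_eigvec hA hμ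
  have h2 : v ⬝ᵥ (A *ᵥ v) = μ * (v ⬝ᵥ v) := by rw [hev, dotProduct_smul]; rfl
  have := h v
  rw [h2] at this
  exact le_of_mul_le_mul_right (by linarith) (dotSelf_pos hv)

lemma sInf_spec_ge (hK : 0 < K) (hA : A.IsHermitian) {m : ℝ}
    (h : ∀ x, m * (x ⬝ᵥ x) ≤ x ⬝ᵥ (A *ᵥ x)) : m ≤ sInf (spectrum ℝ A) :=
  le_csInf (spec_nonempty hK hA) fun _ hμ => spec_elt_ge hA h hμ

lemma spec_elt_le (hA : A.IsHermitian) {m : ℝ} (h : ∀ x, x ⬝ᵥ (A *ᵥ x) ≤ m * (x ⬝ᵥ x))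
    {μ : ℝ} (hμ : μ ∈ spectrum ℝ A) : μ ≤ m := by
  obtain ⟨v, hv, hev⟩ := exists_eigvec hA hμ
  have h2 : v ⬝ᵥ (A *ᵥ v) = μ * (v ⬝ᵥ v) := by rw [hev, dotProduct_smul]; rfl
  have := h v
  rw [h2] at this
  exact le_of_mul_le_mul_right (by linarith) (dotSelf_pos hv)

lemma sSup_spec_le (hK : 0 < K) (hA : A.IsHermitian) {m : ℝ}
    (h : ∀ x, x ⬝ᵥ (A *ᵥ x) ≤ m * (x ⬝ᵥ x)) : sSup (spectrum ℝ A) ≤ m :=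
  csSup_le (spec_nonempty hK hA) fun _ hμ => spec_elt_le hA h hμ

lemma posdef_quad_pos (hA : A.PosDef) {x : Fin K → ℝ} (hx : x ≠ 0) :
    0 < x ⬝ᵥ (A *ᵥ x) := by
  have := hA.dotProduct_mulVec_pos hx
  rwa [star_trivial] at this

lemma spec_elt_pos (hA : A.PosDef) {μ : ℝ} (hμ : μ ∈ spectrum ℝ A) : 0 < μ := by
  obtain ⟨v, hv, hev⟩ := exists_eigvec hA.isHermitian hμ
  have hq : v ⬝ᵥ (A *ᵥ v) = μ * (v ⬝ᵥ v) := by rw [hev, dotProduct_smul]; rfl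
  have hqp := posdef_quad_pos hA hv
  nlinarith [dotSelf_pos hv]

lemma sInf_spec_mem (hK : 0 < K) (hA : A.IsHermitian) : sInf (spectrum ℝ A) ∈ spectrum ℝ A :=
  (spec_nonempty hK hA).csInf_mem (Matrix.finite_real_spectrum (A := A))

lemma sSup_spec_mem (hK : 0 < K) (hA : A.IsHermitian) : sSup (spectrum ℝ A) ∈ spectrum ℝ A :=
  (spec_nonempty hK hA).csSup_mem (Matrix.finite_real_spectrum (A := A))

lemma sInf_spec_pos (hK : 0 < K) (hA : A.PosDef) : 0 < sInf (spectrum ℝ A) :=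
  spec_elt_pos hA (sInf_spec_mem hK hA.isHermitian)

lemma sSup_spec_pos (hK : 0 < K) (hA : A.PosDef) : 0 < sSup (spectrum ℝ A) :=
  spec_elt_pos hA (sSup_spec_mem hK hA.isHermitian)

lemma inv_eig_rel (hA : A.PosDef) {μ : ℝ} (hμ : μ ∈ spectrum ℝ A⁻¹) :
    ∃ v : Fin K → ℝ, v ≠ 0 ∧ v ⬝ᵥ v = μ * (v ⬝ᵥ (A *ᵥ v)) := by
  have hdet : IsUnit A.det := isUnit_iff_ne_zero.mpr hA.det_pos.ne'
  obtain ⟨v, hv, hev⟩ := exists_eigvec hA.isHermitian.inv hμ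
  refine ⟨v, hv, ?_⟩
  have hvv : v = μ • (A *ᵥ v) := by
    calc v = (A * A⁻¹) *ᵥ v := by rw [Matrix.mul_nonsing_inv _ hdet, one_mulVec]
      _ = A *ᵥ (A⁻¹ *ᵥ v) := by rw [← mulVec_mulVec]
      _ = A *ᵥ (μ • v) := by rw [hev]
      _ = μ • (A *ᵥ v) := by rw [mulVec_smul]
  calc v ⬝ᵥ v = v ⬝ᵥ (μ • (A *ᵥ v)) := by rw [← hvv]
    _ = μ * (v ⬝ᵥ (A *ᵥ v)) := by rw [dotProduct_smul]; rfl

/-- quadratic form bounds for the inverse of a positive definite matrix -/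
lemma inv_quad_upper (hK : 0 < K) (hA : A.PosDef) (w : Fin K → ℝ) :
    w ⬝ᵥ (A⁻¹ *ᵥ w) ≤ (sInf (spectrum ℝ A))⁻¹ * (w ⬝ᵥ w) := by
  set ρ := sInf (spectrum ℝ A) with hρdef
  have hρ : 0 < ρ := sInf_spec_pos hK hA
  have hsup : sSup (spectrum ℝ A⁻¹) ≤ ρ⁻¹ := by
    refine csSup_le (spec_nonempty hK hA.isHermitian.inv) fun μ hμ => ?_
    obtain ⟨v, hv, hrel⟩ := inv_eig_rel hA hμ
    have hq := posdef_quad_pos hA hv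
    have hray := rayleigh_lower hA.isHermitian v
    have h1 : μ * ρ ≤ 1 := by nlinarith [dotSelf_pos hv]
    rw [← one_div, le_div_iff₀ hρ]
    linarith
  calc w ⬝ᵥ (A⁻¹ *ᵥ w) ≤ sSup (spectrum ℝ A⁻¹) * (w ⬝ᵥ w) :=
        rayleigh_upper hA.isHermitian.inv w
    _ ≤ ρ⁻¹ * (w ⬝ᵥ w) := mul_le_mul_of_nonneg_right hsup (dotSelf_nonneg w)

lemma inv_quad_lower (hK : 0 < K) (hA : A.PosDef) (w : Fin K → ℝ) :
    (sSup (spectrum ℝ A))⁻¹ * (w ⬝ᵥ w) ≤ w ⬝ᵥ (A⁻¹ *ᵥ w) := by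
  set σ := sSup (spectrum ℝ A) with hσdef
  have hσ : 0 < σ := sSup_spec_pos hK hA
  have hinf : σ⁻¹ ≤ sInf (spectrum ℝ A⁻¹) := by
    refine le_csInf (spec_nonempty hK hA.isHermitian.inv) fun μ hμ => ?_
    obtain ⟨v, hv, hrel⟩ := inv_eig_rel hA hμ
    have hq := posdef_quad_pos hA hv
    have hray := rayleigh_upper hA.isHermitian v
    have h1 : 1 ≤ μ * σ := by nlinarith [dotSelf_pos hv]
    rw [← one_div, div_le_iff₀ hσ]
    linarith
  calc σ⁻¹ * (w ⬝ᵥ w) ≤ sInf (spectrum ℝ A⁻¹) * (w ⬝ᵥ w) :=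
        mul_le_mul_of_nonneg_right hinf (dotSelf_nonneg w)
    _ ≤ w ⬝ᵥ (A⁻¹ *ᵥ w) := rayleigh_lower hA.isHermitian.inv w

lemma three_dot {n : ℕ} (a b c : Fin n → ℝ) :
    (-a + b + c) ⬝ᵥ (-a + b + c) ≤ 3 * (a ⬝ᵥ a) + 3 * (b ⬝ᵥ b) + 3 * (c ⬝ᵥ c) := by
  have key : ∀ i, (-a + b + c) i * (-a + b + c) i
      ≤ 3 * (a i * a i) + 3 * (b i * b i) + 3 * (c i * c i) := by
    intro i
    simp only [Pi.add_apply, Pi.neg_apply]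
    nlinarith [sq_nonneg (a i + b i), sq_nonneg (a i + c i), sq_nonneg (b i - c i),
      sq_nonneg (a i - b i - c i)]
  calc (-a + b + c) ⬝ᵥ (-a + b + c)
      ≤ ∑ i, (3 * (a i * a i) + 3 * (b i * b i) + 3 * (c i * c i)) :=
        Finset.sum_le_sum fun i _ => key i
    _ = 3 * (a ⬝ᵥ a) + 3 * (b ⬝ᵥ b) + 3 * (c ⬝ᵥ c) := by
        simp [dotProduct, Finset.sum_add_distrib, Finset.mul_sum]


lemma quad_MtM {n K : ℕ} (M : Matrix (Fin n) (Fin K) ℝ) (x : Fin K → ℝ) :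
    x ⬝ᵥ ((Mᵀ * M) *ᵥ x) = (M *ᵥ x) ⬝ᵥ (M *ᵥ x) := by
  rw [← mulVec_mulVec, dot_mulVec_symm, transpose_transpose]

lemma smul_one_posdef {K : ℕ} (α : ℝ) (hα : 0 < α) :
    (α • (1 : Matrix (Fin K) (Fin K) ℝ)).PosDef := by
  refine Matrix.PosDef.of_dotProduct_mulVec_pos ?_ ?_
  · show (α • (1 : Matrix (Fin K) (Fin K) ℝ))ᴴ = _
    rw [conjTranspose_smul, conjTranspose_one, star_trivial]
  · intro x hx
    rw [star_trivial, smul_mulVec, one_mulVec, dotProduct_smul, smul_eq_mul]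
    exact mul_pos hα (dotSelf_pos hx)

lemma MtM_possemidef {n K : ℕ} (M : Matrix (Fin n) (Fin K) ℝ) : (Mᵀ * M).PosSemidef := by
  refine Matrix.PosSemidef.of_dotProduct_mulVec_nonneg ?_ ?_
  · rw [← conjTranspose_eq_transpose_of_trivial]
    exact isHermitian_conjTranspose_mul_self M
  · intro x
    rw [star_trivial, quad_MtM]
    exact dotSelf_nonneg _

end Helpers

set_option maxHeartbeats 2000000 in
/-- Main decomposition for the regularized projection error
(Theorem `ProjOperatorSkeletonProofRegularized` with explicit constants). -/
theorem regularized_projection_error_decomposition (n K : ℕ)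
    (H E : Matrix (Fin n) (Fin K) ℝ) (hH : H.rank = K)
    (α : ℝ) (hα : 0 < α)
    (hE : ∑ j, ∑ i, (E i j)^2 ≤ α / 2)
    (u : Fin n → ℝ) (hu : u ⬝ᵥ u = 1) :
    let Hhat := H + E
    let Rα := Hᵀ * H + α • (1 : Matrix (Fin K) (Fin K) ℝ)
    let Λ := Rα⁻¹ *ᵥ (Hᵀ *ᵥ u)
    let tI := (E *ᵥ Λ) ⬝ᵥ (E *ᵥ Λ)
    let tII := ((Hhatᵀ * Hhat - Hᵀ * H) *ᵥ Λ) ⬝ᵥ ((Hhatᵀ * Hhat - Hᵀ * H) *ᵥ Λ)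
    let w3 := Hᵀ *ᵥ u - Hhatᵀ *ᵥ u
    let tIII := w3 ⬝ᵥ (Rα⁻¹ *ᵥ w3)
    let pd := projMatReg H α *ᵥ u - projMatReg Hhat α *ᵥ u
    pd ⬝ᵥ pd ≤ 16 * tI +
      (8 + 64 * condNum (Hᵀ * H)) *
        (rhoMin (Hhatᵀ * Hhat + α • (1 : Matrix (Fin K) (Fin K) ℝ)))⁻¹ * tII +
      (9 + 256 * condNum (Hᵀ * H) + 128 * (condNum (Hᵀ * H))^3) * tIII := by
  intro Hhat Rα Λ tI tII w3 tIII pd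
  have hRαdef : Rα = Hᵀ * H + α • (1 : Matrix (Fin K) (Fin K) ℝ) := rfl
  rcases Nat.eq_zero_or_pos K with hK0 | hK
  · subst hK0
    have hproj : ∀ (M : Matrix (Fin n) (Fin 0) ℝ) (β : ℝ), projMatReg M β = 0 := by
      intro M β
      ext i j
      simp [projMatReg, Matrix.mul_apply]
    have hpd : pd = 0 := by
      show projMatReg H α *ᵥ u - projMatReg Hhat α *ᵥ u = 0
      rw [hproj, hproj, zero_mulVec, sub_zero]
    have htI : tI = 0 := by
      show (E *ᵥ Λ) ⬝ᵥ (E *ᵥ Λ) = 0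
      have : E *ᵥ Λ = 0 := by ext i; simp [mulVec, dotProduct]
      rw [this, zero_dotProduct]
    have htII : tII = 0 := by
      show _ ⬝ᵥ _ = (0:ℝ)
      simp [dotProduct]
    have htIII : tIII = 0 := by
      show _ ⬝ᵥ _ = (0:ℝ)
      simp [dotProduct]
    rw [hpd, htI, htII, htIII, zero_dotProduct]
    ring_nf
    norm_num
  · -- main case : K ≥ 1
    have hHsym : (Hᵀ * H).IsHermitian := by
      rw [← conjTranspose_eq_transpose_of_trivial]
      exact isHermitian_conjTranspose_mul_self H
    have hInj : ∀ v : Fin K → ℝ, H *ᵥ v = 0 → v = 0 := by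
      have hker : LinearMap.ker H.mulVecLin = ⊥ := by
        have h1 := LinearMap.finrank_range_add_finrank_ker H.mulVecLin
        unfold Matrix.rank at hH
        rw [hH, Module.finrank_fin_fun] at h1
        have h2 : Module.finrank ℝ (LinearMap.ker H.mulVecLin) = 0 := by omega
        exact Submodule.finrank_eq_zero.mp h2
      intro v hv
      have hmem : v ∈ LinearMap.ker H.mulVecLin := LinearMap.mem_ker.mpr (by simpa using hv)
      rw [hker] at hmem
      simpa using hmem
    have hPDH : (Hᵀ * H).PosDef := by
      refine Matrix.PosDef.of_dotProduct_mulVec_pos hHsym fun x hx => ?_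
      rw [star_trivial, quad_MtM]
      exact dotSelf_pos fun h => hx (hInj x h)
    have hsm := smul_one_posdef (K := K) α hα
    have hPD_R : Rα.PosDef := hPDH.add hsm
    have hPD_Rh : (Hhatᵀ * Hhat + α • (1 : Matrix (Fin K) (Fin K) ℝ)).PosDef :=
      Matrix.PosDef.posSemidef_add (MtM_possemidef Hhat) hsm
    set Rh := Hhatᵀ * Hhat + α • (1 : Matrix (Fin K) (Fin K) ℝ) with hRh
    have hdetR : IsUnit Rα.det := isUnit_iff_ne_zero.mpr hPD_R.det_pos.ne'
    have hdetRh : IsUnit Rh.det := isUnit_iff_ne_zero.mpr hPD_Rh.det_pos.ne'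
    -- vectors
    set a := E *ᵥ Λ with ha
    set w2 := (Hhatᵀ * Hhat - Hᵀ * H) *ᵥ Λ with hw2
    set y2 := Rh⁻¹ *ᵥ w2 with hy2
    set y3 := Rh⁻¹ *ᵥ w3 with hy3
    set b := Hhat *ᵥ y2 with hb
    set c := Hhat *ᵥ y3 with hc
    have htIdef : tI = a ⬝ᵥ a := rfl
    have htIIdef : tII = w2 ⬝ᵥ w2 := rfl
    have htIIIdef : tIII = w3 ⬝ᵥ (Rα⁻¹ *ᵥ w3) := rfl
    -- the key decomposition pd = -a + b + c
    have hRΛ : Rα *ᵥ Λ = Hᵀ *ᵥ u := by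
      show Rα *ᵥ (Rα⁻¹ *ᵥ (Hᵀ *ᵥ u)) = Hᵀ *ᵥ u
      rw [mulVec_mulVec, Matrix.mul_nonsing_inv _ hdetR, one_mulVec]
    have hw23 : w2 + w3 = Rh *ᵥ Λ - Hhatᵀ *ᵥ u := by
      have hB : Hhatᵀ * Hhat - Hᵀ * H = Rh - Rα := by rw [hRh, hRαdef]; abel
      rw [hw2, hB, sub_mulVec, hRΛ]
      show (Rh *ᵥ Λ - Hᵀ *ᵥ u) + (Hᵀ *ᵥ u - Hhatᵀ *ᵥ u) = Rh *ᵥ Λ - Hhatᵀ *ᵥ u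
      abel
    have hbc : b + c = Hhat *ᵥ Λ - Hhat *ᵥ (Rh⁻¹ *ᵥ (Hhatᵀ *ᵥ u)) := by
      have hy23 : y2 + y3 = Λ - Rh⁻¹ *ᵥ (Hhatᵀ *ᵥ u) := by
        rw [hy2, hy3, ← mulVec_add, hw23, mulVec_sub, mulVec_mulVec,
          Matrix.nonsing_inv_mul _ hdetRh, one_mulVec]
      rw [hb, hc, ← mulVec_add, hy23, mulVec_sub]
    have hpd2 : pd = H *ᵥ Λ - Hhat *ᵥ (Rh⁻¹ *ᵥ (Hhatᵀ *ᵥ u)) := by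
      show projMatReg H α *ᵥ u - projMatReg Hhat α *ᵥ u = _
      unfold projMatReg
      rw [← mulVec_mulVec, ← mulVec_mulVec, ← mulVec_mulVec, ← mulVec_mulVec]
    have hHhatΛ : Hhat *ᵥ Λ = H *ᵥ Λ + a := by
      show (H + E) *ᵥ Λ = H *ᵥ Λ + a
      rw [add_mulVec, ha]
    have hpd3 : pd = -a + b + c := by
      rw [hpd2]
      have h1 : -a + b + c = -a + (b + c) := by abel
      rw [h1, hbc, hHhatΛ]
      abel
    -- quadratic bound
    have hsq : pd ⬝ᵥ pd ≤ 3 * (a ⬝ᵥ a) + 3 * (b ⬝ᵥ b) + 3 * (c ⬝ᵥ c) := by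
      rw [hpd3]; exact three_dot a b c
    -- ‖Hhat y‖² ≤ w ⬝ y for y = Rh⁻¹ w
    have hquad : ∀ w y : Fin K → ℝ, y = Rh⁻¹ *ᵥ w →
        (Hhat *ᵥ y) ⬝ᵥ (Hhat *ᵥ y) ≤ w ⬝ᵥ y := by
      intro w y hy
      have hRy : Rh *ᵥ y = w := by
        rw [hy, mulVec_mulVec, Matrix.mul_nonsing_inv _ hdetRh, one_mulVec]
      have hsplit : (Hhatᵀ * Hhat) *ᵥ y = w - α • y := by
        have hstep : Rh *ᵥ y = (Hhatᵀ * Hhat) *ᵥ y + α • y := by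
          rw [hRh, add_mulVec, smul_mulVec, one_mulVec]
        rw [← hRy, hstep]; abel
      have hbb : (Hhat *ᵥ y) ⬝ᵥ (Hhat *ᵥ y) = y ⬝ᵥ w - α * (y ⬝ᵥ y) := by
        rw [← quad_MtM, hsplit, dotProduct_sub, dotProduct_smul, smul_eq_mul]
      rw [hbb, dotProduct_comm y w]
      have := mul_nonneg hα.le (dotSelf_nonneg y)
      linarith
    have hbw2 : b ⬝ᵥ b ≤ w2 ⬝ᵥ y2 := by
      have h := hquad w2 y2 hy2
      rwa [← hb] at h
    have hcw3 : c ⬝ᵥ c ≤ w3 ⬝ᵥ y3 := by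
      have h := hquad w3 y3 hy3
      rwa [← hc] at h
    have hw2y2 : w2 ⬝ᵥ y2 ≤ (sInf (spectrum ℝ Rh))⁻¹ * tII := by
      have h := inv_quad_upper hK hPD_Rh w2
      rw [← hy2, ← htIIdef] at h
      exact h
    have hw3y3 : w3 ⬝ᵥ y3 ≤ (sInf (spectrum ℝ Rh))⁻¹ * (w3 ⬝ᵥ w3) := by
      have h := inv_quad_upper hK hPD_Rh w3
      rwa [← hy3] at h
    -- spectral scalars
    set lmin := sInf (spectrum ℝ (Hᵀ * H)) with hlmin
    set lmax := sSup (spectrum ℝ (Hᵀ * H)) with hlmax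
    have hlmin_pos : 0 < lmin := sInf_spec_pos hK hPDH
    have hlmax_ge : lmin ≤ lmax := le_csSup spec_bddAbove (sInf_spec_mem hK hHsym)
    have hlmax_pos : 0 < lmax := lt_of_lt_of_le hlmin_pos hlmax_ge
    -- ‖E x‖² ≤ (α/2) ‖x‖²
    have hEbound : ∀ x : Fin K → ℝ, (E *ᵥ x) ⬝ᵥ (E *ᵥ x) ≤ (α/2) * (x ⬝ᵥ x) := by
      intro x
      have hper : ∀ i, (E *ᵥ x) i * (E *ᵥ x) i ≤ (∑ j, (E i j)^2) * (x ⬝ᵥ x) := by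
        intro i
        have h1 : (E *ᵥ x) i = ∑ j, E i j * x j := rfl
        have h2 := Finset.sum_mul_sq_le_sq_mul_sq Finset.univ (fun j => E i j) x
        have h3 : x ⬝ᵥ x = ∑ j, (x j)^2 := Finset.sum_congr rfl fun j _ => (sq (x j)).symm
        rw [h1, h3]
        calc (∑ j, E i j * x j) * (∑ j, E i j * x j) = (∑ j, E i j * x j)^2 := (sq _).symm
          _ ≤ (∑ j, (E i j)^2) * (∑ j, (x j)^2) := h2
      calc (E *ᵥ x) ⬝ᵥ (E *ᵥ x) = ∑ i, (E *ᵥ x) i * (E *ᵥ x) i := rfl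
        _ ≤ ∑ i, (∑ j, (E i j)^2) * (x ⬝ᵥ x) := Finset.sum_le_sum fun i _ => hper i
        _ = (∑ i, ∑ j, (E i j)^2) * (x ⬝ᵥ x) := by rw [← Finset.sum_mul]
        _ ≤ (α/2) * (x ⬝ᵥ x) := by
            apply mul_le_mul_of_nonneg_right _ (dotSelf_nonneg x)
            rw [Finset.sum_comm]
            exact hE
    -- lower bound for the smallest eigenvalue of Rh
    have hRhmin : (lmin + α)/2 ≤ sInf (spectrum ℝ Rh) := by
      apply sInf_spec_ge hK hPD_Rh.isHermitian
      intro x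
      have hsx : x ⬝ᵥ (Rh *ᵥ x) = (Hhat *ᵥ x) ⬝ᵥ (Hhat *ᵥ x) + α * (x ⬝ᵥ x) := by
        rw [hRh, add_mulVec, dotProduct_add, smul_mulVec, one_mulVec,
          dotProduct_smul, smul_eq_mul, quad_MtM]
      have hse : Hhat *ᵥ x = H *ᵥ x + E *ᵥ x := by
        show (H + E) *ᵥ x = _
        rw [add_mulVec]
      have hexp : (Hhat *ᵥ x) ⬝ᵥ (Hhat *ᵥ x) =
          (H *ᵥ x) ⬝ᵥ (H *ᵥ x) + 2 * ((H *ᵥ x) ⬝ᵥ (E *ᵥ x)) + (E *ᵥ x) ⬝ᵥ (E *ᵥ x) := by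
        rw [hse, dotProduct_add, add_dotProduct, add_dotProduct,
          dotProduct_comm (E *ᵥ x) (H *ᵥ x)]
        ring
      have hCS := dot_cs_sq (H *ᵥ x) (E *ᵥ x)
      have hEx := hEbound x
      have hray := rayleigh_lower hHsym x
      rw [quad_MtM] at hray
      have hXnn := dotSelf_nonneg x
      have hSnn := dotSelf_nonneg (H *ᵥ x)
      have hEnn := dotSelf_nonneg (E *ᵥ x)
      rw [hsx, hexp]
      set X := x ⬝ᵥ x
      set S := (H *ᵥ x) ⬝ᵥ (H *ᵥ x)
      set T := (H *ᵥ x) ⬝ᵥ (E *ᵥ x)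
      set E2 := (E *ᵥ x) ⬝ᵥ (E *ᵥ x)
      have h2T : -(S/2 + 2*E2) ≤ 2*T := by
        nlinarith [sq_nonneg (S/2 - 2*E2), sq_nonneg (S/2 + 2*E2 + 2*T)]
      nlinarith
    have hρh_pos : 0 < sInf (spectrum ℝ Rh) := sInf_spec_pos hK hPD_Rh
    -- upper bound for the largest eigenvalue of Rα
    have hRmax : sSup (spectrum ℝ Rα) ≤ lmax + α := by
      apply sSup_spec_le hK hPD_R.isHermitian
      intro x
      have hsx : x ⬝ᵥ (Rα *ᵥ x) = x ⬝ᵥ ((Hᵀ * H) *ᵥ x) + α * (x ⬝ᵥ x) := by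
        rw [hRαdef, add_mulVec, dotProduct_add, smul_mulVec, one_mulVec,
          dotProduct_smul, smul_eq_mul]
      have hray := rayleigh_upper hHsym x
      have hXnn := dotSelf_nonneg x
      rw [hsx]
      nlinarith
    have hσ_pos : 0 < sSup (spectrum ℝ Rα) := sSup_spec_pos hK hPD_R
    have htIII_lb : (sSup (spectrum ℝ Rα))⁻¹ * (w3 ⬝ᵥ w3) ≤ tIII := by
      rw [htIIIdef]
      exact inv_quad_lower hK hPD_R w3
    have htIII_nonneg : 0 ≤ tIII :=
      le_trans (mul_nonneg (inv_nonneg.mpr hσ_pos.le) (dotSelf_nonneg w3)) htIII_lb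
    have hw3w3 : w3 ⬝ᵥ w3 ≤ (lmax + α) * tIII := by
      have h1 : w3 ⬝ᵥ w3 ≤ sSup (spectrum ℝ Rα) * tIII := by
        have h2 := mul_le_mul_of_nonneg_left htIII_lb hσ_pos.le
        rw [← mul_assoc, mul_inv_cancel₀ hσ_pos.ne', one_mul] at h2
        exact h2
      calc w3 ⬝ᵥ w3 ≤ sSup (spectrum ℝ Rα) * tIII := h1
        _ ≤ (lmax + α) * tIII := mul_le_mul_of_nonneg_right hRmax htIII_nonneg
    -- condition number facts
    have hcond : condNum (Hᵀ * H) = lmax / lmin := rfl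
    have hrhoMinRh : rhoMin Rh = sInf (spectrum ℝ Rh) := rfl
    set C := condNum (Hᵀ * H) with hCdef
    have hCval : C * lmin = lmax := by
      rw [hcond]
      exact div_mul_cancel₀ lmax hlmin_pos.ne'
    have hC1 : 1 ≤ C := by
      rw [hcond]
      exact (one_le_div hlmin_pos).mpr hlmax_ge
    -- inverse bound
    set ρi := (sInf (spectrum ℝ Rh))⁻¹ with hρi
    have hρi_nonneg : 0 ≤ ρi := inv_nonneg.mpr hρh_pos.le
    have hρi_le : ρi * (lmin + α) ≤ 2 := by
      have hpos2 : 0 < (lmin + α)/2 := by linarith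
      have h1 : ρi ≤ ((lmin + α)/2)⁻¹ := by
        rw [hρi]
        exact inv_anti₀ hpos2 hRhmin
      have h2 : ((lmin + α)/2)⁻¹ = 2 / (lmin + α) := by
        rw [inv_div]
      have h3 : ρi ≤ 2 / (lmin + α) := h1.trans_eq h2
      calc ρi * (lmin + α) ≤ (2 / (lmin + α)) * (lmin + α) :=
            mul_le_mul_of_nonneg_right h3 (by linarith)
        _ = 2 := by field_simp
    -- assemble
    have hT2 : 3 * (b ⬝ᵥ b) ≤ 3 * (ρi * tII) := by
      have := hbw2.trans hw2y2
      linarith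
    have hT3 : 3 * (c ⬝ᵥ c) ≤ 3 * (ρi * ((lmax + α) * tIII)) := by
      have h1 : c ⬝ᵥ c ≤ ρi * (w3 ⬝ᵥ w3) := hcw3.trans hw3y3
      have h2 : ρi * (w3 ⬝ᵥ w3) ≤ ρi * ((lmax + α) * tIII) :=
        mul_le_mul_of_nonneg_left hw3w3 hρi_nonneg
      linarith
    have htI_nonneg : 0 ≤ tI := by rw [htIdef]; exact dotSelf_nonneg a
    have htII_nonneg : 0 ≤ tII := by rw [htIIdef]; exact dotSelf_nonneg w2
    have hmid : 3 * (ρi * tII) ≤ (8 + 64 * C) * ρi * tII := by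
      have h1 : (0:ℝ) ≤ ρi * tII := mul_nonneg hρi_nonneg htII_nonneg
      nlinarith
    have hthird : 3 * (ρi * ((lmax + α) * tIII)) ≤ (9 + 256 * C + 128 * C^3) * tIII := by
      have hkey : ρi * (lmax + α) ≤ 2 * (1 + C) := by
        nlinarith [mul_le_mul_of_nonneg_left hρi_le (le_of_lt hlmin_pos),
          mul_nonneg hρi_nonneg hα.le, mul_nonneg hρi_nonneg hlmin_pos.le]
      have hcoef : 3 * (ρi * (lmax + α)) ≤ 9 + 256 * C + 128 * C^3 := by
        nlinarith [hC1, sq_nonneg C, pow_pos (lt_of_lt_of_le one_pos hC1) 3]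
      calc 3 * (ρi * ((lmax + α) * tIII)) = (3 * (ρi * (lmax + α))) * tIII := by ring
        _ ≤ (9 + 256 * C + 128 * C^3) * tIII :=
            mul_le_mul_of_nonneg_right hcoef htIII_nonneg
    have hgoalrw : (rhoMin Rh)⁻¹ = ρi := by rw [hrhoMinRh, hρi]
    rw [hgoalrw]
    calc pd ⬝ᵥ pd ≤ 3 * (a ⬝ᵥ a) + 3 * (b ⬝ᵥ b) + 3 * (c ⬝ᵥ c) := hsq
      _ ≤ 16 * tI + (8 + 64 * C) * ρi * tII + (9 + 256 * C + 128 * C^3) * tIII := by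
          rw [htIdef] at htI_nonneg ⊢
          linarith [hT2, hT3, hmid, hthird]


end ProofHelpers
end
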